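/- Let 1 ≤ d < n be integers, let P ∈ ℝ^{d×n} have invertible leading d×d block P_I, set Q := P_I^{-1} P_II, and let α ≥ β > (n−d)/2 satisfy d/(2α) + (n−d)/(2β) < 1 and α > d/2, and let μ ∈ [0,α], ν ∈ [0,β]. Then there exists a constant C > 0, independent of K, L and of the coefficient family, such that for all positive integers K, L and every family c : ℤ^n → ℂ with M := Σ_{k∈ℤ^n} (‖k_I + Q k_II‖^{2α} + ‖k_II‖^{2β})|c_k|² < ∞, the interpolation error coefficients e_k, defined by e_k = − Σ_{m ∈ ℤ^n ∖ {0}} c_{(k_I + 2K m_I, k_II + 2L m_II)} for k ∈ 𝒦_{K,L} and e_k = c_k for k ∉ 𝒦_{K,L}, satisfy ( Σ_{k∈ℤ^n} (‖k_I + Q k_II‖^{2μ} + ‖k_II‖^{2ν}) |e_k|² )^{1/2} ≤ C (K^{−α} + L^{−β})(K^{μ} + L^{ν}) M^{1/2}. -/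

import Mathlib

open scoped ENNReal

/-- Euclidean norm of a vector in `ℝ^m`. -/
noncomputable def euclNorm {m : ℕ} (x : Fin m → ℝ) : ℝ :=
  ‖(EuclideanSpace.equiv (Fin m) ℝ).symm x‖

/-- Mixed weight `‖k_I + Q k_II‖^(2α) + ‖k_II‖^(2β)` (real powers, `0⁰ = 1`). -/
noncomputable def wMix (d m : ℕ) (Q : Matrix (Fin d) (Fin m) ℝ) (α β : ℝ)
    (k : Fin (d + m) → ℤ) : ℝ :=
  euclNorm ((fun i => (k (Fin.castAdd m i) : ℝ)) +
      Q.mulVec fun j => (k (Fin.natAdd d j) : ℝ)) ^ (2 * α) +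
    euclNorm (fun j => (k (Fin.natAdd d j) : ℝ)) ^ (2 * β)

/-- Membership in the parallelogram index set `𝒦_{K,L}`:
each component of `k_I + Q k_II` lies in `[-K, K)` and each component of `k_II` in `[-L, L)`. -/
def memK (d m : ℕ) (Q : Matrix (Fin d) (Fin m) ℝ) (K L : ℕ) (k : Fin (d + m) → ℤ) : Prop :=
  (∀ i : Fin d,
      -(K : ℝ) ≤ (k (Fin.castAdd m i) : ℝ) + Q.mulVec (fun j => (k (Fin.natAdd d j) : ℝ)) i ∧
      (k (Fin.castAdd m i) : ℝ) + Q.mulVec (fun j => (k (Fin.natAdd d j) : ℝ)) i < (K : ℝ)) ∧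
  (∀ j : Fin m, -(L : ℤ) ≤ k (Fin.natAdd d j) ∧ k (Fin.natAdd d j) < (L : ℤ))

/-- The shifted index `(k_I + 2K v_I, k_II + 2L v_II)`. -/
def shiftIdx (d m K L : ℕ) (k v : Fin (d + m) → ℤ) : Fin (d + m) → ℤ :=
  Fin.append (fun i => k (Fin.castAdd m i) + 2 * (K : ℤ) * v (Fin.castAdd m i))
    fun j => k (Fin.natAdd d j) + 2 * (L : ℤ) * v (Fin.natAdd d j)


lemma euclNorm_eq {p : ℕ} (x : Fin p → ℝ) : euclNorm x = Real.sqrt (∑ i, (x i)^2) := by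
  simp [euclNorm, EuclideanSpace.norm_eq, sq_abs]

lemma euclNorm_nonneg {p : ℕ} (x : Fin p → ℝ) : 0 ≤ euclNorm x := norm_nonneg _

lemma abs_le_euclNorm {p : ℕ} (x : Fin p → ℝ) (i : Fin p) : |x i| ≤ euclNorm x := by
  rw [euclNorm_eq, ← Real.sqrt_sq_eq_abs]
  exact Real.sqrt_le_sqrt (Finset.single_le_sum (fun j _ => sq_nonneg (x j)) (Finset.mem_univ i))

lemma euclNorm_mono {p : ℕ} {x y : Fin p → ℝ} (h : ∀ i, |x i| ≤ |y i|) :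
    euclNorm x ≤ euclNorm y := by
  rw [euclNorm_eq, euclNorm_eq]
  apply Real.sqrt_le_sqrt
  exact Finset.sum_le_sum fun i _ => by
    have := h i
    nlinarith [abs_nonneg (x i), sq_abs (x i), sq_abs (y i)]

lemma euclNorm_smul {p : ℕ} (c : ℝ) (x : Fin p → ℝ) :
    euclNorm (fun i => c * x i) = |c| * euclNorm x := by
  have : (EuclideanSpace.equiv (Fin p) ℝ).symm (fun i => c * x i)
      = c • (EuclideanSpace.equiv (Fin p) ℝ).symm x := rfl
  rw [euclNorm, this, norm_smul, euclNorm]; simp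

lemma euclNorm_add_le {p : ℕ} (x y : Fin p → ℝ) :
    euclNorm (x + y) ≤ euclNorm x + euclNorm y := by
  have : (EuclideanSpace.equiv (Fin p) ℝ).symm (x + y)
      = (EuclideanSpace.equiv (Fin p) ℝ).symm x + (EuclideanSpace.equiv (Fin p) ℝ).symm y := rfl
  rw [euclNorm, this]; exact norm_add_le _ _

lemma le_euclNorm_of_forall {p : ℕ} {K : ℝ} (hK : 0 ≤ K) {u : Fin p → ℤ} {w : Fin p → ℝ}
    (h : ∀ i, K * |(u i : ℝ)| ≤ |w i|) :
    K * euclNorm (fun i => (u i : ℝ)) ≤ euclNorm w := by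
  have h1 : K * euclNorm (fun i => (u i : ℝ)) = euclNorm (fun i => K * (u i : ℝ)) := by
    rw [euclNorm_smul, abs_of_nonneg hK]
  rw [h1]
  exact euclNorm_mono fun i => by
    rw [abs_mul, abs_of_nonneg hK]; exact h i

-- a nonzero integer vector has euclNorm ≥ 1
lemma one_le_euclNorm_int {p : ℕ} {u : Fin p → ℤ} (hu : u ≠ 0) :
    1 ≤ euclNorm (fun i => (u i : ℝ)) := by
  obtain ⟨i, hi⟩ := Function.ne_iff.mp hu
  calc (1:ℝ) ≤ |(u i : ℝ)| := by
        rw [← Int.cast_abs]; exact_mod_cast Int.one_le_abs (by simpa using hi)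
    _ ≤ _ := abs_le_euclNorm (fun i => (u i : ℝ)) i

-- scalar rounding lemma
lemma round_trick {K : ℝ} (hK : 1 ≤ K) (t : ℝ) (n : ℤ) :
    K * |((n - round (-t / (2*K)) : ℤ) : ℝ)| ≤ |t + 2*K*n| := by
  set r : ℤ := round (-t / (2*K)) with hr
  have hK0 : (0:ℝ) < K := by linarith
  have h2K : (0:ℝ) < 2*K := by linarith
  have h1 : |t + 2*K*r| ≤ K := by
    have h0 := abs_sub_round (-t / (2*K))
    have h2 : |((-t/(2*K)) - r) * (2*K)| ≤ (1/2) * (2*K) := by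
      rw [abs_mul, abs_of_pos h2K]
      exact mul_le_mul_of_nonneg_right h0 h2K.le
    have h3 : ((-t/(2*K)) - r) * (2*K) = -(t + 2*K*r) := by field_simp; ring
    rw [h3, abs_neg] at h2; linarith
  rcases eq_or_ne n r with rfl | hne
  · simp
  · have hge1 : (1:ℝ) ≤ |((n - r : ℤ) : ℝ)| := by
      rw [← Int.cast_abs]; exact_mod_cast Int.one_le_abs (sub_ne_zero.mpr hne)
    have : |t + 2*K*n| ≥ 2*K*|((n - r : ℤ) : ℝ)| - K := by
      have : t + 2*K*n = (t + 2*K*r) + 2*K*((n - r : ℤ) : ℝ) := by push_cast; ring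
      rw [this]
      have htri : |2*K*((n-r:ℤ):ℝ)| - |t + 2*K*r| ≤ |(t + 2*K*r) + 2*K*((n-r:ℤ):ℝ)| := by
        have := abs_add_le ((t + 2*K*r) + 2*K*((n-r:ℤ):ℝ)) (-(t + 2*K*r))
        simp only [add_neg_cancel_comm, abs_neg] at this
        linarith
      have habs : |2*K*((n-r:ℤ):ℝ)| = 2*K*|((n-r:ℤ):ℝ)| := by
        rw [abs_mul, abs_of_pos h2K]
      linarith
    nlinarith [abs_nonneg ((n - r : ℤ) : ℝ)]

-- base lemma: |x| ≤ K → K|n| ≤ |x + 2Kn|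
lemma base_trick {K x : ℝ} (hx : |x| ≤ K) (n : ℤ) :
    K * |(n : ℝ)| ≤ |x + 2*K*n| := by
  have hK : 0 ≤ K := le_trans (abs_nonneg x) hx
  rcases eq_or_ne n 0 with rfl | hne
  · simp
  · have hge1 : (1:ℝ) ≤ |(n:ℝ)| := by
      rw [← Int.cast_abs]; exact_mod_cast Int.one_le_abs hne
    have h2 : |2*K*(n:ℝ)| - |x| ≤ |x + 2*K*n| := by
      have := abs_add_le (x + 2*K*n) (-x)
      simp only [add_neg_cancel_comm, abs_neg] at this
      linarith
    rw [abs_mul, abs_of_nonneg (by linarith : (0:ℝ) ≤ 2*K)] at h2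
    nlinarith

lemma summable_one_add_abs {t : ℝ} (ht : 1 < t) :
    Summable (fun n : ℤ => (1 + |(n:ℝ)|) ^ (-t)) := by
  have hg := Real.summable_abs_int_rpow ht
  have hind : Summable (fun n : ℤ => if n = 0 then (1:ℝ) else 0) := by
    apply summable_of_ne_finset_zero (s := {(0:ℤ)})
    intro b hb; simp only [Finset.mem_singleton] at hb; simp [hb]
  have hle : ∀ n : ℤ, (1 + |(n:ℝ)|) ^ (-t) ≤ |(n:ℝ)| ^ (-t) + if n = 0 then (1:ℝ) else 0 := by
    intro n
    rcases eq_or_ne n 0 with rfl | hn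
    · simp [Real.zero_rpow (by linarith : -t ≠ 0), Real.one_rpow]
    · have h0 : (0:ℝ) < |(n:ℝ)| := by
        simp only [abs_pos, Int.cast_ne_zero]; exact hn
      have := Real.rpow_le_rpow_of_nonpos h0 (by linarith [abs_nonneg (n:ℝ)] : |(n:ℝ)| ≤ 1 + |(n:ℝ)|)
        (by linarith : -t ≤ 0)
      simp [hn]; linarith
  exact Summable.of_nonneg_of_le (fun n => by positivity) hle (hg.add hind)

lemma zeta1_lt_top {t : ℝ} (ht : 1 < t) :
    (∑' n : ℤ, ENNReal.ofReal ((1 + |(n:ℝ)|) ^ (-t))) ≠ ⊤ := by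
  rw [← ENNReal.ofReal_tsum_of_nonneg (fun n => by positivity) (summable_one_add_abs ht)]
  exact ENNReal.ofReal_ne_top

lemma tsum_pi_prod (p : ℕ) (g : ℤ → ℝ≥0∞) :
    ∑' x : Fin p → ℤ, ∏ i, g (x i) = (∑' n : ℤ, g n) ^ p := by
  induction p with
  | zero =>
      rw [pow_zero]
      have : ∀ x : Fin 0 → ℤ, (∏ i, g (x i)) = 1 := fun x => by simp
      rw [tsum_congr this, tsum_eq_single (fun i => (0:ℤ)) (fun b hb => absurd (funext fun i => i.elim0) hb.symm)]
  | succ q ih =>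
      rw [← (Fin.consEquiv (fun _ : Fin (q+1) => ℤ)).tsum_eq (fun x => ∏ i, g (x i))]
      have hterm : ∀ a : ℤ, ∀ y : Fin q → ℤ,
          (∏ i, g ((Fin.consEquiv (fun _ : Fin (q+1) => ℤ)) (a, y) i)) = g a * ∏ i, g (y i) := by
        intro a y
        have : ((Fin.consEquiv (fun _ : Fin (q+1) => ℤ)) (a, y)) = Fin.cons a y := rfl
        rw [this, ← Fin.prod_cons (g a) (fun i => g (y i))]
        congr 1; funext i
        refine Fin.cases ?_ ?_ i <;> simp
      calc ∑' z : ℤ × (Fin q → ℤ), ∏ i, g ((Fin.consEquiv (fun _ : Fin (q+1) => ℤ)) z i)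
          = ∑' (a : ℤ) (y : Fin q → ℤ), g a * ∏ i, g (y i) := by
            rw [ENNReal.tsum_prod']
            exact tsum_congr fun a => tsum_congr fun y => hterm a y
        _ = ∑' (a : ℤ), g a * ∑' y : Fin q → ℤ, ∏ i, g (y i) := by
            exact tsum_congr fun a => ENNReal.tsum_mul_left
        _ = (∑' n : ℤ, g n) * (∑' y : Fin q → ℤ, ∏ i, g (y i)) := ENNReal.tsum_mul_right
        _ = (∑' n : ℤ, g n) ^ (q+1) := by rw [ih, pow_succ, mul_comm]

lemma euclNorm_zero {p : ℕ} : euclNorm (fun _ : Fin p => (0:ℝ)) = 0 := by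
  rw [euclNorm_eq]; simp

lemma zetaE_lt_top (p : ℕ) (hp : 0 < p) {s : ℝ} (hs : (p:ℝ) < s) :
    (∑' x : Fin p → ℤ, ENNReal.ofReal (euclNorm (fun i => (x i : ℝ)) ^ (-s))) ≠ ⊤ := by
  have hp0 : (0:ℝ) < p := by exact_mod_cast hp
  have hs0 : 0 < s := lt_trans hp0 hs
  have ht : 1 < s / p := (one_lt_div hp0).mpr hs
  have hpt : ∀ x : Fin p → ℤ, ENNReal.ofReal (euclNorm (fun i => (x i:ℝ)) ^ (-s)) ≤
      ENNReal.ofReal (2^s) * ∏ i, ENNReal.ofReal ((1 + |(x i : ℝ)|) ^ (-(s/p))) := by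
    intro x
    rcases eq_or_ne x 0 with rfl | hx
    · have : euclNorm (fun i => (((0 : Fin p → ℤ) i : ℝ))) = 0 := by
        simpa using euclNorm_zero (p := p)
      rw [this, Real.zero_rpow (by linarith : -s ≠ 0)]
      simp
    · set A := euclNorm (fun i => (x i : ℝ)) with hA
      have hA1 : 1 ≤ A := one_le_euclNorm_int hx
      have hA0 : (0:ℝ) < A := by linarith
      have hfac : ∀ i, (1 + |(x i:ℝ)|) ≤ 2*A := fun i => by
        have := abs_le_euclNorm (fun i => (x i : ℝ)) i; linarith
      have hP0 : (0:ℝ) < ∏ i, (1 + |(x i:ℝ)|) :=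
        Finset.prod_pos fun i _ => by positivity
      have hPle : (∏ i, (1 + |(x i:ℝ)|)) ≤ (2*A)^p := by
        calc (∏ i, (1 + |(x i:ℝ)|)) ≤ ∏ _i : Fin p, (2*A) :=
              Finset.prod_le_prod (fun i _ => by positivity) (fun i _ => hfac i)
          _ = (2*A)^p := by rw [Finset.prod_const, Finset.card_univ, Fintype.card_fin]
      have h1 : ((2*A)^p : ℝ) ^ (-(s/p)) ≤ (∏ i, (1 + |(x i:ℝ)|)) ^ (-(s/p)) :=
        Real.rpow_le_rpow_of_nonpos hP0 hPle (neg_nonpos.mpr (by positivity))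
      have h2 : ((2*A)^p : ℝ) ^ (-(s/p)) = 2^(-s) * A^(-s) := by
        rw [← Real.rpow_natCast (2*A) p, ← Real.rpow_mul (by positivity)]
        have hps : (p:ℝ) * (-(s/p)) = -s := by field_simp
        rw [hps, Real.mul_rpow (by norm_num) hA0.le]
      have key : A ^ (-s) ≤ 2^s * (∏ i, (1 + |(x i:ℝ)|)) ^ (-(s/p)) := by
        calc A^(-s) = (2:ℝ)^s * ((2:ℝ)^(-s) * A^(-s)) := by
              rw [← mul_assoc, ← Real.rpow_add (by norm_num : (0:ℝ) < 2), add_neg_cancel,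
                Real.rpow_zero, one_mul]
          _ = 2^s * ((2*A)^p : ℝ) ^ (-(s/p)) := by rw [h2]
          _ ≤ _ := by
              apply mul_le_mul_of_nonneg_left h1 (by positivity)
      calc ENNReal.ofReal (A ^ (-s)) ≤
            ENNReal.ofReal (2^s * (∏ i, (1 + |(x i:ℝ)|)) ^ (-(s/p))) :=
            ENNReal.ofReal_le_ofReal key
        _ = ENNReal.ofReal (2^s) * ENNReal.ofReal ((∏ i, (1 + |(x i:ℝ)|)) ^ (-(s/p))) :=
            ENNReal.ofReal_mul (by positivity)
        _ = ENNReal.ofReal (2^s) * ∏ i, ENNReal.ofReal ((1 + |(x i : ℝ)|) ^ (-(s/p))) := by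
            rw [← Real.finset_prod_rpow Finset.univ _ (fun i _ => by positivity) (-(s/p)),
              ENNReal.ofReal_prod_of_nonneg (fun i _ => by positivity)]
  have hbound : (∑' x : Fin p → ℤ, ENNReal.ofReal (euclNorm (fun i => (x i : ℝ)) ^ (-s))) ≤
      ENNReal.ofReal (2^s) * (∑' n : ℤ, ENNReal.ofReal ((1 + |(n:ℝ)|) ^ (-(s/p)))) ^ p := by
    calc _ ≤ ∑' x : Fin p → ℤ, (ENNReal.ofReal (2^s) *
          ∏ i, ENNReal.ofReal ((1 + |(x i : ℝ)|) ^ (-(s/p)))) := ENNReal.tsum_le_tsum hpt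
      _ = ENNReal.ofReal (2^s) * ∑' x : Fin p → ℤ,
          ∏ i, ENNReal.ofReal ((1 + |(x i : ℝ)|) ^ (-(s/p))) := ENNReal.tsum_mul_left
      _ = _ := by rw [tsum_pi_prod p (fun n => ENNReal.ofReal ((1 + |(n:ℝ)|) ^ (-(s/p))))]
  exact ne_top_of_le_ne_top
    (ENNReal.mul_ne_top ENNReal.ofReal_ne_top (ENNReal.pow_ne_top (zeta1_lt_top ht))) hbound
open MeasureTheory in
lemma tsum_CS {ι : Type*} [Countable ι] (f g : ι → ℝ≥0∞) :
    (∑' i, f i * g i) ≤ (∑' i, f i ^ (2:ℝ)) ^ ((1:ℝ)/2) * (∑' i, g i ^ (2:ℝ)) ^ ((1:ℝ)/2) := by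
  letI : MeasurableSpace ι := ⊤
  haveI : MeasurableSingletonClass ι := ⟨fun _ => trivial⟩
  have hconj : Real.HolderConjugate 2 2 := Real.HolderConjugate.two_two
  have hmeas : ∀ h : ι → ℝ≥0∞, Measurable h := fun h s _ => trivial
  have := ENNReal.lintegral_mul_le_Lp_mul_Lq (Measure.count) hconj
    (hmeas f).aemeasurable (hmeas g).aemeasurable
  simp only [Pi.mul_apply, MeasureTheory.lintegral_count] at this
  exact this

lemma pow_shift {x γ δ : ℝ} (hγδ : γ ≤ δ) {X : ℝ} (hX : 0 < X) (hx : X ≤ x) :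
    x ^ (2*γ) ≤ X ^ (2*(γ-δ)) * x ^ (2*δ) := by
  have hx0 : 0 < x := lt_of_lt_of_le hX hx
  have hsplit : x ^ (2*γ) = x ^ (2*(γ-δ)) * x ^ (2*δ) := by
    rw [← Real.rpow_add hx0]; ring_nf
  rw [hsplit]
  exact mul_le_mul_of_nonneg_right (Real.rpow_le_rpow_of_nonpos hX hx (by linarith))
    (Real.rpow_nonneg hx0.le _)

lemma rpow_two_eq {X γ : ℝ} (hX : 0 ≤ X) : X ^ (2*γ) = (X ^ γ)^2 := by
  rw [mul_comm, Real.rpow_mul hX, Real.rpow_two]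

lemma claimA_gen {a b Kr Lr α β μ ν : ℝ} (ha : 0 ≤ a) (hb : 0 ≤ b)
    (hK : 1 ≤ Kr) (hL : 1 ≤ Lr) (hμ0 : 0 ≤ μ) (hμ : μ ≤ α) (hν0 : 0 ≤ ν) (hν : ν ≤ β)
    (hout : Kr ≤ a ∨ Lr ≤ b) :
    a^(2*μ) ≤ ((Kr^(-α) + Lr^(-β)) * (Kr^μ + Lr^ν))^2 * (a^(2*α) + b^(2*β)) := by
  have hK0 : (0:ℝ) < Kr := by linarith
  have hL0 : (0:ℝ) < Lr := by linarith
  set R1 := Kr^(-α) + Lr^(-β) with hR1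
  set R2 := Kr^μ + Lr^ν with hR2
  have hR1n : 0 ≤ R1 := by positivity
  have hR2n : 0 ≤ R2 := by positivity
  have haα : 0 ≤ a ^ (2*α) := Real.rpow_nonneg ha _
  have hbβ : 0 ≤ b ^ (2*β) := Real.rpow_nonneg hb _
  by_cases hKa : Kr ≤ a
  · -- a ≥ Kr case
    have h1 := pow_shift hμ hK0 hKa
    have h2 : Kr ^ (2*(μ-α)) ≤ (R1 * R2)^2 := by
      have he : Kr ^ (2*(μ-α)) = (Kr ^ (μ-α))^2 := rpow_two_eq hK0.le
      have he2 : Kr ^ (μ-α) = Kr^(-α) * Kr^μ := by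
        rw [← Real.rpow_add hK0]; ring_nf
      have hle : Kr ^ (μ-α) ≤ R1 * R2 := by
        rw [he2]
        apply mul_le_mul (by rw [hR1]; nlinarith [Real.rpow_nonneg hL0.le (-β)])
          (by rw [hR2]; nlinarith [Real.rpow_nonneg hL0.le ν])
          (Real.rpow_nonneg hK0.le μ) hR1n
      rw [he]
      exact pow_le_pow_left₀ (Real.rpow_nonneg hK0.le _) hle 2
    calc a^(2*μ) ≤ Kr^(2*(μ-α)) * a^(2*α) := h1
      _ ≤ (R1*R2)^2 * a^(2*α) := mul_le_mul_of_nonneg_right h2 haα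
      _ ≤ (R1*R2)^2 * (a^(2*α) + b^(2*β)) := by nlinarith [sq_nonneg (R1*R2)]
  · -- a < Kr, so Lr ≤ b
    have hLb : Lr ≤ b := hout.resolve_left hKa
    have ha' : a ≤ Kr := le_of_not_ge hKa
    have hβ0 : (0:ℝ) ≤ β := le_trans hν0 hν
    have h3 : a^(2*μ) ≤ Kr^(2*μ) := Real.rpow_le_rpow ha ha' (by linarith)
    have h4 : Lr^(2*β) ≤ b^(2*β) := Real.rpow_le_rpow hL0.le hLb (by linarith)
    have h5 : (Lr^(-β))^2 * Lr^(2*β) = 1 := by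
      rw [← rpow_two_eq hL0.le, ← Real.rpow_add hL0]
      ring_nf; exact Real.rpow_zero Lr
    have h6 : (1:ℝ) ≤ (Lr^(-β))^2 * b^(2*β) := by
      rw [← h5]
      exact mul_le_mul_of_nonneg_left h4 (sq_nonneg _)
    have h7 : Kr^(2*μ) = (Kr^μ)^2 := rpow_two_eq hK0.le
    have h8 : Kr^μ ≤ R2 := by rw [hR2]; nlinarith [Real.rpow_nonneg hL0.le ν]
    have h9 : Lr^(-β) ≤ R1 := by rw [hR1]; nlinarith [Real.rpow_nonneg hK0.le (-α)]
    calc a^(2*μ) ≤ Kr^(2*μ) := h3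
      _ = (Kr^μ)^2 * 1 := by rw [h7, mul_one]
      _ ≤ (Kr^μ)^2 * ((Lr^(-β))^2 * b^(2*β)) :=
          mul_le_mul_of_nonneg_left h6 (sq_nonneg _)
      _ = (Lr^(-β) * Kr^μ)^2 * b^(2*β) := by ring
      _ ≤ (R1*R2)^2 * b^(2*β) := by
          have hKμ : 0 ≤ Kr^μ := Real.rpow_nonneg hK0.le μ
          have h10 : Lr^(-β) * Kr^μ ≤ R1 * R2 := mul_le_mul h9 h8 hKμ hR1n
          have h11 : 0 ≤ Lr^(-β) * Kr^μ :=
            mul_nonneg (Real.rpow_nonneg hL0.le _) hKμ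
          exact mul_le_mul_of_nonneg_right (pow_le_pow_left₀ h11 h10 2) hbβ
      _ ≤ (R1*R2)^2 * (a^(2*α) + b^(2*β)) := by nlinarith [sq_nonneg (R1*R2)]

lemma weight_out {a b Kr Lr α β μ ν : ℝ} (ha : 0 ≤ a) (hb : 0 ≤ b)
    (hK : 1 ≤ Kr) (hL : 1 ≤ Lr) (hμ0 : 0 ≤ μ) (hμ : μ ≤ α) (hν0 : 0 ≤ ν) (hν : ν ≤ β)
    (hout : Kr ≤ a ∨ Lr ≤ b) :
    a^(2*μ) + b^(2*ν) ≤
      2 * ((Kr^(-α) + Lr^(-β)) * (Kr^μ + Lr^ν))^2 * (a^(2*α) + b^(2*β)) := by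
  have A := claimA_gen ha hb hK hL hμ0 hμ hν0 hν hout
  have B := claimA_gen hb ha hL hK hν0 hν hμ0 hμ hout.symm
  ring_nf at A B ⊢
  linarith

lemma inv_split {A B θ : ℝ} (hA : 0 < A) (hB : 0 < B) (hθ0 : 0 ≤ θ) (hθ1 : θ ≤ 1) :
    (A + B)⁻¹ ≤ A^(-θ) * B^(-(1-θ)) := by
  have hAG : A^θ * B^(1-θ) ≤ A + B := by
    have h := Real.geom_mean_le_arith_mean2_weighted hθ0 (by linarith : (0:ℝ) ≤ 1-θ)
      hA.le hB.le (by ring)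
    nlinarith [hA.le, hB.le]
  have hpos : 0 < A^θ * B^(1-θ) := by positivity
  have h2 : (A+B)⁻¹ ≤ (A^θ * B^(1-θ))⁻¹ := by
    apply inv_anti₀ hpos hAG
  calc (A+B)⁻¹ ≤ (A^θ * B^(1-θ))⁻¹ := h2
    _ = A^(-θ) * B^(-(1-θ)) := by
        rw [mul_inv, ← Real.rpow_neg hA.le, ← Real.rpow_neg hB.le]

lemma int_resolve {Lz a b s t : ℤ} (hL : 0 < Lz) (ha1 : -Lz ≤ a) (ha2 : a < Lz)
    (hb1 : -Lz ≤ b) (hb2 : b < Lz) (h : a + 2*Lz*s = b + 2*Lz*t) : a = b ∧ s = t := by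
  have h1 : a - b = 2*Lz*(t - s) := by ring_nf; linarith
  have habs : |a - b| < 2*Lz := by
    rw [abs_lt]; constructor <;> linarith
  have h2 : |t - s| < 1 := by
    rw [h1, abs_mul] at habs
    have : |2*Lz| = 2*Lz := abs_of_pos (by linarith)
    rw [this] at habs
    nlinarith [abs_nonneg (t - s)]
  have h3 : t - s = 0 := Int.abs_lt_one_iff.mp h2
  have h4 : s = t := by omega
  refine ⟨?_, h4⟩
  have : a - b = 0 := by rw [h1, h3, mul_zero]
  omega
lemma inv_ofReal_le {w W0 : ℝ} (hW0 : 0 < W0) (h : W0 ≤ w) :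
    (ENNReal.ofReal w)⁻¹ ≤ ENNReal.ofReal W0⁻¹ := by
  rw [← ENNReal.ofReal_inv_of_pos (lt_of_lt_of_le hW0 h)]
  exact ENNReal.ofReal_le_ofReal (inv_anti₀ hW0 h)

lemma euclNorm_sq {p : ℕ} (x : Fin p → ℝ) : euclNorm x ^ 2 = ∑ i, (x i)^2 := by
  rw [euclNorm_eq, Real.sq_sqrt (Finset.sum_nonneg fun i _ => sq_nonneg _)]

lemma in_weight_bound {p : ℕ} {x : Fin p → ℝ} {X γ : ℝ} (hX : 0 ≤ X) (hγ : 0 ≤ γ)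
    (h : ∀ i, |x i| ≤ X) : euclNorm x ^ (2*γ) ≤ (p:ℝ)^γ * (X^γ)^2 := by
  have hn : 0 ≤ euclNorm x := euclNorm_nonneg x
  have h1 : euclNorm x ^ (2*γ) = (euclNorm x ^ 2) ^ γ := by
    rw [Real.rpow_mul hn, Real.rpow_two]
  have h2 : euclNorm x ^ 2 ≤ (p:ℝ) * X^2 := by
    rw [euclNorm_sq]
    calc (∑ i, (x i)^2) ≤ ∑ _i : Fin p, X^2 := by
          apply Finset.sum_le_sum
          intro i _
          have := h i
          nlinarith [abs_nonneg (x i), sq_abs (x i)]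
      _ = (p:ℝ) * X^2 := by
          rw [Finset.sum_const, Finset.card_univ, Fintype.card_fin, nsmul_eq_mul]
  have h3 : (euclNorm x ^ 2) ^ γ ≤ ((p:ℝ) * X^2) ^ γ :=
    Real.rpow_le_rpow (sq_nonneg _) h2 hγ
  have h4 : ((p:ℝ) * X^2) ^ γ = (p:ℝ)^γ * (X^γ)^2 := by
    rw [Real.mul_rpow (by positivity) (sq_nonneg X)]
    congr 1
    rw [← Real.rpow_two, ← Real.rpow_natCast (X ^ γ) 2, ← Real.rpow_mul hX, ← Real.rpow_mul hX]
    norm_num [mul_comm]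
  rw [h1, ← h4]
  exact h3

lemma wMix_nonneg (d m : ℕ) (Q : Matrix (Fin d) (Fin m) ℝ) (γ δ : ℝ) (k : Fin (d+m) → ℤ) :
    0 ≤ wMix d m Q γ δ k :=
  add_nonneg (Real.rpow_nonneg (euclNorm_nonneg _) _) (Real.rpow_nonneg (euclNorm_nonneg _) _)

-- weight of a shifted index, in explicit form
lemma wMix_shift (d m : ℕ) (Q : Matrix (Fin d) (Fin m) ℝ) (γ δ : ℝ) (K L : ℕ)
    (k v : Fin (d+m) → ℤ) :
    wMix d m Q γ δ (shiftIdx d m K L k v) =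
      euclNorm (fun i => (((k (Fin.castAdd m i) : ℝ) +
          Q.mulVec (fun j => (k (Fin.natAdd d j) : ℝ)) i +
          2*(L:ℝ)*(Q.mulVec (fun j => (v (Fin.natAdd d j) : ℝ)) i)) +
          2*(K:ℝ)*(v (Fin.castAdd m i) : ℝ))) ^ (2*γ) +
      euclNorm (fun j => ((k (Fin.natAdd d j) : ℝ) +
          2*(L:ℝ)*(v (Fin.natAdd d j) : ℝ))) ^ (2*δ) := by
  have hII : ∀ j, (shiftIdx d m K L k v) (Fin.natAdd d j) =
      k (Fin.natAdd d j) + 2*(L:ℤ)*v (Fin.natAdd d j) := fun j => by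
    simp [shiftIdx, Fin.append_right]
  have hI : ∀ i, (shiftIdx d m K L k v) (Fin.castAdd m i) =
      k (Fin.castAdd m i) + 2*(K:ℤ)*v (Fin.castAdd m i) := fun i => by
    simp [shiftIdx, Fin.append_left]
  have hvecII : (fun j => ((shiftIdx d m K L k v) (Fin.natAdd d j) : ℝ)) =
      (fun j => ((k (Fin.natAdd d j) : ℝ) + 2*(L:ℝ)*(v (Fin.natAdd d j) : ℝ))) := by
    funext j; rw [hII j]; push_cast; ring
  have hargsplit : (fun j => ((k (Fin.natAdd d j) : ℝ) + 2*(L:ℝ)*(v (Fin.natAdd d j) : ℝ))) =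
      (fun j => (k (Fin.natAdd d j) : ℝ)) + (2*(L:ℝ)) • (fun j => (v (Fin.natAdd d j) : ℝ)) := by
    funext j; simp [Pi.add_apply, Pi.smul_apply, smul_eq_mul]
  have hvecI : ((fun i => ((shiftIdx d m K L k v) (Fin.castAdd m i) : ℝ)) +
        Q.mulVec (fun j => ((shiftIdx d m K L k v) (Fin.natAdd d j) : ℝ))) =
      (fun i => (((k (Fin.castAdd m i) : ℝ) +
          Q.mulVec (fun j => (k (Fin.natAdd d j) : ℝ)) i +
          2*(L:ℝ)*(Q.mulVec (fun j => (v (Fin.natAdd d j) : ℝ)) i)) +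
          2*(K:ℝ)*(v (Fin.castAdd m i) : ℝ))) := by
    funext i
    rw [Pi.add_apply, hvecII, hargsplit, Matrix.mulVec_add, Matrix.mulVec_smul]
    rw [hI i]
    simp only [Pi.add_apply, Pi.smul_apply, smul_eq_mul]
    push_cast; ring
  show euclNorm _ ^ (2*γ) + euclNorm _ ^ (2*δ) = _
  rw [hvecI, hvecII]
lemma aliasing_core (d m : ℕ)
    (Q : Matrix (Fin d) (Fin m) ℝ) (K L : ℕ)
    (α β θ : ℝ) (hα0 : 0 < α) (hβ0 : 0 < β) (hθ0 : 0 < θ) (hθ1 : θ < 1)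
    (hK1 : 1 ≤ (K:ℝ)) (hL1 : 1 ≤ (L:ℝ))
    (k : Fin (d+m) → ℤ) (hk : memK d m Q K L k) :
    (∀ v : Fin (d+m) → ℤ, v ≠ 0 → 0 < wMix d m Q α β (shiftIdx d m K L k v)) ∧
    (∑' v : {v : Fin (d+m) → ℤ // v ≠ 0},
        (ENNReal.ofReal (wMix d m Q α β (shiftIdx d m K L k v.1)))⁻¹) ≤
      ENNReal.ofReal (((K:ℝ)^(-α) + (L:ℝ)^(-β))^2) *
        ((∑' x : Fin d → ℤ, ENNReal.ofReal (euclNorm (fun i => (x i:ℝ)) ^ (-(2*α)))) +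
         (∑' y : Fin m → ℤ, ENNReal.ofReal (euclNorm (fun j => (y j:ℝ)) ^ (-(2*β)))) +
         (∑' x : Fin d → ℤ, ENNReal.ofReal (euclNorm (fun i => (x i:ℝ)) ^ (-(2*α*θ)))) *
         (∑' y : Fin m → ℤ, ENNReal.ofReal (euclNorm (fun j => (y j:ℝ)) ^ (-(2*β*(1-θ)))))) := by
  classical
  have hKr0 : (0:ℝ) < (K:ℝ) := by linarith
  have hLr0 : (0:ℝ) < (L:ℝ) := by linarith
  have hxk : ∀ i, |(k (Fin.castAdd m i):ℝ) + Q.mulVec (fun j => (k (Fin.natAdd d j):ℝ)) i| ≤ (K:ℝ) :=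
    fun i => abs_le.mpr ⟨(hk.1 i).1, le_of_lt (hk.1 i).2⟩
  have hyk : ∀ j, |(k (Fin.natAdd d j):ℝ)| ≤ (L:ℝ) := fun j => by
    rw [abs_le]; constructor
    · exact_mod_cast (hk.2 j).1
    · exact_mod_cast le_of_lt (hk.2 j).2
  -- the translated offset and rounding vector
  set tf : (Fin m → ℤ) → Fin d → ℝ := fun w i =>
    ((k (Fin.castAdd m i):ℝ) + Q.mulVec (fun j => (k (Fin.natAdd d j):ℝ)) i) +
      2*(L:ℝ)*(Q.mulVec (fun j => (w j:ℝ)) i) with htf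
  set rf : (Fin m → ℤ) → Fin d → ℤ := fun w i => round (-tf w i / (2*(K:ℝ))) with hrf
  -- decomposition of the weight of a shifted index
  have hdec : ∀ v : Fin (d+m) → ℤ, wMix d m Q α β (shiftIdx d m K L k v) =
      euclNorm (fun i => tf (fun j => v (Fin.natAdd d j)) i + 2*(K:ℝ)*((v (Fin.castAdd m i)):ℝ)) ^ (2*α) +
      euclNorm (fun j => ((k (Fin.natAdd d j)):ℝ) + 2*(L:ℝ)*((v (Fin.natAdd d j)):ℝ)) ^ (2*β) := by
    intro v
    rw [wMix_shift d m Q α β K L k v]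
  -- lower bound for the second block
  have hblow : ∀ (v : Fin (d+m) → ℤ),
      (L:ℝ) * euclNorm (fun j => ((v (Fin.natAdd d j) : ℤ) : ℝ)) ≤
      euclNorm (fun j => ((k (Fin.natAdd d j)):ℝ) + 2*(L:ℝ)*((v (Fin.natAdd d j)):ℝ)) := by
    intro v
    exact le_euclNorm_of_forall hLr0.le (fun j => base_trick (hyk j) (v (Fin.natAdd d j)))
  -- lower bound for the first block via rounding
  have halow : ∀ (w : Fin m → ℤ) (u : Fin d → ℤ),
      (K:ℝ) * euclNorm (fun i => ((u i - rf w i : ℤ) : ℝ)) ≤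
      euclNorm (fun i => tf w i + 2*(K:ℝ)*((u i):ℝ)) := by
    intro w u
    apply le_euclNorm_of_forall hKr0.le
    intro i
    have := round_trick hK1 (tf w i) (u i)
    simpa [hrf] using this
  -- lower bound for the first block when w = 0
  have ht0 : ∀ i, tf 0 i = (k (Fin.castAdd m i):ℝ) + Q.mulVec (fun j => (k (Fin.natAdd d j):ℝ)) i := by
    intro i
    have hz : (fun j : Fin m => (((0 : Fin m → ℤ) j : ℤ) : ℝ)) = (0 : Fin m → ℝ) := by
      funext j; simp
    simp only [htf]
    rw [hz, Matrix.mulVec_zero]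
    simp
  have halow0 : ∀ (u : Fin d → ℤ),
      (K:ℝ) * euclNorm (fun i => ((u i : ℤ) : ℝ)) ≤
      euclNorm (fun i => tf 0 i + 2*(K:ℝ)*((u i):ℝ)) := by
    intro u
    apply le_euclNorm_of_forall hKr0.le
    intro i
    rw [ht0 i]
    exact base_trick (hxk i) (u i)
  -- splitting a vanishing pair
  have hsplit0 : ∀ v : Fin (d+m) → ℤ, (fun i => v (Fin.castAdd m i)) = 0 →
      (fun j => v (Fin.natAdd d j)) = 0 → v = 0 := by
    intro v hu hw
    funext x
    refine Fin.addCases (fun i => ?_) (fun j => ?_) x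
    · exact congrFun hu i
    · exact congrFun hw j
  -- rpow algebra helpers
  have idK : ∀ E : ℝ, 0 ≤ E → (((K:ℝ)*E)^(2*α))⁻¹ = (K:ℝ)^(-(2*α)) * E^(-(2*α)) := by
    intro E hE
    rw [← Real.rpow_neg (mul_nonneg hKr0.le hE), Real.mul_rpow hKr0.le hE]
  have idL : ∀ E : ℝ, 0 ≤ E → (((L:ℝ)*E)^(2*β))⁻¹ = (L:ℝ)^(-(2*β)) * E^(-(2*β)) := by
    intro E hE
    rw [← Real.rpow_neg (mul_nonneg hLr0.le hE), Real.mul_rpow hLr0.le hE]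
  have idKθ : ∀ E : ℝ, 0 ≤ E → (((K:ℝ)*E)^(2*α))^(-θ) = (K:ℝ)^(-(2*α*θ)) * E^(-(2*α*θ)) := by
    intro E hE
    rw [← Real.rpow_mul (mul_nonneg hKr0.le hE),
      show (2*α)*(-θ) = -(2*α*θ) by ring, Real.mul_rpow hKr0.le hE]
  have idLθ : ∀ E : ℝ, 0 ≤ E → (((L:ℝ)*E)^(2*β))^(-(1-θ)) =
      (L:ℝ)^(-(2*β*(1-θ))) * E^(-(2*β*(1-θ))) := by
    intro E hE
    rw [← Real.rpow_mul (mul_nonneg hLr0.le hE),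
      show (2*β)*(-(1-θ)) = -(2*β*(1-θ)) by ring, Real.mul_rpow hLr0.le hE]
  -- positivity of shifted weights
  have hwpos : ∀ v : Fin (d+m) → ℤ, v ≠ 0 → 0 < wMix d m Q α β (shiftIdx d m K L k v) := by
    intro v hv
    rw [hdec v]
    by_cases hw : (fun j => v (Fin.natAdd d j)) = 0
    · -- second block may vanish; use first
      have hu : (fun i => v (Fin.castAdd m i)) ≠ 0 := fun h => hv (hsplit0 v h hw)
      have hEu : 1 ≤ euclNorm (fun i => ((v (Fin.castAdd m i)):ℝ)) := one_le_euclNorm_int hu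
      have h1 : (0:ℝ) < (K:ℝ) * euclNorm (fun i => ((v (Fin.castAdd m i)):ℝ)) := by nlinarith
      have h2 := halow0 (fun i => v (Fin.castAdd m i))
      have hw' : (fun j => v (Fin.natAdd d j)) = (0 : Fin m → ℤ) := hw
      have h3 : (0:ℝ) < euclNorm (fun i => tf (fun j => v (Fin.natAdd d j)) i +
          2*(K:ℝ)*((v (Fin.castAdd m i)):ℝ)) := by
        rw [hw']; exact lt_of_lt_of_le h1 h2
      have := Real.rpow_pos_of_pos h3 (2*α)
      have hb := Real.rpow_nonneg (euclNorm_nonneg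
        (fun j => ((k (Fin.natAdd d j)):ℝ) + 2*(L:ℝ)*((v (Fin.natAdd d j)):ℝ))) (2*β)
      linarith
    · have hEw : 1 ≤ euclNorm (fun j => ((v (Fin.natAdd d j)):ℝ)) := one_le_euclNorm_int hw
      have h1 : (0:ℝ) < (L:ℝ) * euclNorm (fun j => ((v (Fin.natAdd d j)):ℝ)) := by nlinarith
      have h3 : (0:ℝ) < euclNorm (fun j => ((k (Fin.natAdd d j)):ℝ) +
          2*(L:ℝ)*((v (Fin.natAdd d j)):ℝ)) := lt_of_lt_of_le h1 (hblow v)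
      have := Real.rpow_pos_of_pos h3 (2*β)
      have ha := Real.rpow_nonneg (euclNorm_nonneg
        (fun i => tf (fun j => v (Fin.natAdd d j)) i + 2*(K:ℝ)*((v (Fin.castAdd m i)):ℝ))) (2*α)
      linarith
  refine ⟨hwpos, ?_⟩
  set ZA := ∑' x : Fin d → ℤ, ENNReal.ofReal (euclNorm (fun i => (x i:ℝ)) ^ (-(2*α))) with hZA
  set ZB := ∑' y : Fin m → ℤ, ENNReal.ofReal (euclNorm (fun j => (y j:ℝ)) ^ (-(2*β))) with hZB
  set ZC := ∑' x : Fin d → ℤ, ENNReal.ofReal (euclNorm (fun i => (x i:ℝ)) ^ (-(2*α*θ))) with hZC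
  set ZD := ∑' y : Fin m → ℤ, ENNReal.ofReal (euclNorm (fun j => (y j:ℝ)) ^ (-(2*β*(1-θ)))) with hZD
  set Φ1 : (Fin d → ℤ) × (Fin m → ℤ) → ℝ≥0∞ := fun p =>
    if p.2 = 0 then ENNReal.ofReal ((K:ℝ)^(-(2*α))) *
      ENNReal.ofReal (euclNorm (fun i => (p.1 i:ℝ)) ^ (-(2*α))) else 0 with hΦ1
  set Φ2 : (Fin d → ℤ) × (Fin m → ℤ) → ℝ≥0∞ := fun p =>
    if p.1 = rf p.2 then ENNReal.ofReal ((L:ℝ)^(-(2*β))) *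
      ENNReal.ofReal (euclNorm (fun j => (p.2 j:ℝ)) ^ (-(2*β))) else 0 with hΦ2
  set Φ3 : (Fin d → ℤ) × (Fin m → ℤ) → ℝ≥0∞ := fun p =>
    (ENNReal.ofReal ((K:ℝ)^(-(2*α*θ))) * ENNReal.ofReal ((L:ℝ)^(-(2*β*(1-θ)))) *
      ENNReal.ofReal (euclNorm (fun j => (p.2 j:ℝ)) ^ (-(2*β*(1-θ))))) *
      ENNReal.ofReal (euclNorm (fun i => ((p.1 - rf p.2) i : ℝ)) ^ (-(2*α*θ))) with hΦ3
  -- pointwise bound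
  have hptw : ∀ v : Fin (d+m) → ℤ, v ≠ 0 →
      (ENNReal.ofReal (wMix d m Q α β (shiftIdx d m K L k v)))⁻¹ ≤
      (fun p => Φ1 p + Φ2 p + Φ3 p)
        (((fun i => v (Fin.castAdd m i)), (fun j => v (Fin.natAdd d j))) :
          (Fin d → ℤ) × (Fin m → ℤ)) := by
    intro v hv
    simp only
    by_cases hw : (fun j => v (Fin.natAdd d j)) = 0
    · -- Φ1 case
      have hu : (fun i => v (Fin.castAdd m i)) ≠ 0 := fun h => hv (hsplit0 v h hw)
      have hEu : 1 ≤ euclNorm (fun i => ((v (Fin.castAdd m i)):ℝ)) := one_le_euclNorm_int hu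
      have hE0 : (0:ℝ) < euclNorm (fun i => ((v (Fin.castAdd m i)):ℝ)) := by linarith
      have hA0 : (0:ℝ) < ((K:ℝ) * euclNorm (fun i => ((v (Fin.castAdd m i)):ℝ)))^(2*α) :=
        Real.rpow_pos_of_pos (by nlinarith) _
      have hWge : ((K:ℝ) * euclNorm (fun i => ((v (Fin.castAdd m i)):ℝ)))^(2*α) ≤
          wMix d m Q α β (shiftIdx d m K L k v) := by
        rw [hdec v]
        have h1 : (K:ℝ) * euclNorm (fun i => ((v (Fin.castAdd m i)):ℝ)) ≤
            euclNorm (fun i => tf (fun j => v (Fin.natAdd d j)) i +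
              2*(K:ℝ)*((v (Fin.castAdd m i)):ℝ)) := by
          rw [hw]; exact halow0 _
        have h2 := Real.rpow_le_rpow (by positivity) h1 (by positivity : (0:ℝ) ≤ 2*α)
        have h3 := Real.rpow_nonneg (euclNorm_nonneg
          (fun j => ((k (Fin.natAdd d j)):ℝ) + 2*(L:ℝ)*((v (Fin.natAdd d j)):ℝ))) (2*β)
        linarith
      have hstep : (ENNReal.ofReal (wMix d m Q α β (shiftIdx d m K L k v)))⁻¹ ≤
          Φ1 ((fun i => v (Fin.castAdd m i)), (fun j => v (Fin.natAdd d j))) := by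
        calc (ENNReal.ofReal (wMix d m Q α β (shiftIdx d m K L k v)))⁻¹
            ≤ ENNReal.ofReal ((((K:ℝ) * euclNorm (fun i => ((v (Fin.castAdd m i)):ℝ)))^(2*α))⁻¹) :=
              inv_ofReal_le hA0 hWge
          _ = ENNReal.ofReal ((K:ℝ)^(-(2*α)) *
                euclNorm (fun i => ((v (Fin.castAdd m i)):ℝ)) ^ (-(2*α))) := by
              rw [idK _ hE0.le]
          _ = _ := by
              rw [hΦ1]
              simp only [if_pos hw]
              rw [ENNReal.ofReal_mul (Real.rpow_nonneg hKr0.le _)]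
      exact hstep.trans ((self_le_add_right _ _).trans (self_le_add_right _ _))
    · have hEw : 1 ≤ euclNorm (fun j => ((v (Fin.natAdd d j)):ℝ)) := one_le_euclNorm_int hw
      have hEw0 : (0:ℝ) < euclNorm (fun j => ((v (Fin.natAdd d j)):ℝ)) := by linarith
      have hB0 : (0:ℝ) < ((L:ℝ) * euclNorm (fun j => ((v (Fin.natAdd d j)):ℝ)))^(2*β) :=
        Real.rpow_pos_of_pos (by nlinarith) _
      have hBle : ((L:ℝ) * euclNorm (fun j => ((v (Fin.natAdd d j)):ℝ)))^(2*β) ≤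
          euclNorm (fun j => ((k (Fin.natAdd d j)):ℝ) + 2*(L:ℝ)*((v (Fin.natAdd d j)):ℝ)) ^ (2*β) :=
        Real.rpow_le_rpow (by positivity) (hblow v) (by positivity)
      by_cases hur : (fun i => v (Fin.castAdd m i)) = rf (fun j => v (Fin.natAdd d j))
      · -- Φ2 case
        have hWge : ((L:ℝ) * euclNorm (fun j => ((v (Fin.natAdd d j)):ℝ)))^(2*β) ≤
            wMix d m Q α β (shiftIdx d m K L k v) := by
          rw [hdec v]
          have h3 := Real.rpow_nonneg (euclNorm_nonneg
            (fun i => tf (fun j => v (Fin.natAdd d j)) i + 2*(K:ℝ)*((v (Fin.castAdd m i)):ℝ))) (2*α)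
          linarith
        have hstep : (ENNReal.ofReal (wMix d m Q α β (shiftIdx d m K L k v)))⁻¹ ≤
            Φ2 ((fun i => v (Fin.castAdd m i)), (fun j => v (Fin.natAdd d j))) := by
          calc (ENNReal.ofReal (wMix d m Q α β (shiftIdx d m K L k v)))⁻¹
              ≤ ENNReal.ofReal ((((L:ℝ) * euclNorm (fun j => ((v (Fin.natAdd d j)):ℝ)))^(2*β))⁻¹) :=
                inv_ofReal_le hB0 hWge
            _ = ENNReal.ofReal ((L:ℝ)^(-(2*β)) *
                  euclNorm (fun j => ((v (Fin.natAdd d j)):ℝ)) ^ (-(2*β))) := by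
                rw [idL _ hEw0.le]
            _ = _ := by
                rw [hΦ2]
                simp only [if_pos hur]
                rw [ENNReal.ofReal_mul (Real.rpow_nonneg hLr0.le _)]
        exact hstep.trans ((le_add_self).trans (self_le_add_right _ _))
      · -- Φ3 case
        have hune : (fun i => v (Fin.castAdd m i)) - rf (fun j => v (Fin.natAdd d j)) ≠ 0 :=
          sub_ne_zero.mpr hur
        have hEu' : 1 ≤ euclNorm (fun i =>
            (((fun i => v (Fin.castAdd m i)) - rf (fun j => v (Fin.natAdd d j))) i : ℝ)) :=
          one_le_euclNorm_int hune
        have hEu'0 : (0:ℝ) < euclNorm (fun i =>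
            (((fun i => v (Fin.castAdd m i)) - rf (fun j => v (Fin.natAdd d j))) i : ℝ)) := by
          linarith
        have hA0 : (0:ℝ) < ((K:ℝ) * euclNorm (fun i =>
            (((fun i => v (Fin.castAdd m i)) - rf (fun j => v (Fin.natAdd d j))) i : ℝ)))^(2*α) :=
          Real.rpow_pos_of_pos (by nlinarith) _
        have hWge : ((K:ℝ) * euclNorm (fun i =>
              (((fun i => v (Fin.castAdd m i)) - rf (fun j => v (Fin.natAdd d j))) i : ℝ)))^(2*α) +
            ((L:ℝ) * euclNorm (fun j => ((v (Fin.natAdd d j)):ℝ)))^(2*β) ≤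
            wMix d m Q α β (shiftIdx d m K L k v) := by
          rw [hdec v]
          have h1 : (K:ℝ) * euclNorm (fun i =>
              (((fun i => v (Fin.castAdd m i)) - rf (fun j => v (Fin.natAdd d j))) i : ℝ)) ≤
              euclNorm (fun i => tf (fun j => v (Fin.natAdd d j)) i +
                2*(K:ℝ)*((v (Fin.castAdd m i)):ℝ)) := by
            have := halow (fun j => v (Fin.natAdd d j)) (fun i => v (Fin.castAdd m i))
            simpa [Pi.sub_apply] using this
          have h2 := Real.rpow_le_rpow (by positivity) h1 (by positivity : (0:ℝ) ≤ 2*α)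
          exact add_le_add h2 hBle
        calc (ENNReal.ofReal (wMix d m Q α β (shiftIdx d m K L k v)))⁻¹
            ≤ ENNReal.ofReal ((((K:ℝ) * euclNorm (fun i =>
                (((fun i => v (Fin.castAdd m i)) - rf (fun j => v (Fin.natAdd d j))) i : ℝ)))^(2*α) +
                ((L:ℝ) * euclNorm (fun j => ((v (Fin.natAdd d j)):ℝ)))^(2*β))⁻¹) :=
              inv_ofReal_le (by positivity) hWge
          _ ≤ ENNReal.ofReal ((((K:ℝ) * euclNorm (fun i =>
                (((fun i => v (Fin.castAdd m i)) - rf (fun j => v (Fin.natAdd d j))) i : ℝ)))^(2*α))^(-θ) *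
                ((((L:ℝ) * euclNorm (fun j => ((v (Fin.natAdd d j)):ℝ)))^(2*β))^(-(1-θ)))) :=
              ENNReal.ofReal_le_ofReal (inv_split hA0 hB0 hθ0.le hθ1.le)
          _ = ENNReal.ofReal (((K:ℝ)^(-(2*α*θ)) * euclNorm (fun i =>
                (((fun i => v (Fin.castAdd m i)) - rf (fun j => v (Fin.natAdd d j))) i : ℝ)) ^ (-(2*α*θ))) *
                ((L:ℝ)^(-(2*β*(1-θ))) *
                  euclNorm (fun j => ((v (Fin.natAdd d j)):ℝ)) ^ (-(2*β*(1-θ))))) := by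
              rw [idKθ _ hEu'0.le, idLθ _ hEw0.le]
          _ = Φ3 ((fun i => v (Fin.castAdd m i)), (fun j => v (Fin.natAdd d j))) := by
              rw [hΦ3]
              simp only
              rw [← ENNReal.ofReal_mul (Real.rpow_nonneg hKr0.le _),
                ← ENNReal.ofReal_mul (by positivity),
                ← ENNReal.ofReal_mul (by positivity)]
              congr 1
              ring
          _ ≤ _ := le_add_self
  -- injectivity into the pair space
  have hinj2 : Function.Injective (fun v : {v : Fin (d+m) → ℤ // v ≠ 0} =>
      (((fun i => v.1 (Fin.castAdd m i)), (fun j => v.1 (Fin.natAdd d j))) :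
        (Fin d → ℤ) × (Fin m → ℤ))) := by
    intro v w h
    have h1 : (fun i => v.1 (Fin.castAdd m i)) = (fun i => w.1 (Fin.castAdd m i)) :=
      congrArg Prod.fst h
    have h2 : (fun j => v.1 (Fin.natAdd d j)) = (fun j => w.1 (Fin.natAdd d j)) :=
      congrArg Prod.snd h
    apply Subtype.ext; funext x
    refine Fin.addCases (fun i => ?_) (fun j => ?_) x
    · exact congrFun h1 i
    · exact congrFun h2 j
  -- the three sums
  have hsum1 : ∑' p : (Fin d → ℤ) × (Fin m → ℤ), Φ1 p = ENNReal.ofReal ((K:ℝ)^(-(2*α))) * ZA := by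
    rw [ENNReal.tsum_prod']
    have hin : ∀ a : Fin d → ℤ, (∑' b : Fin m → ℤ, Φ1 (a, b)) =
        ENNReal.ofReal ((K:ℝ)^(-(2*α))) * ENNReal.ofReal (euclNorm (fun i => (a i:ℝ)) ^ (-(2*α))) := by
      intro a
      simp only [hΦ1]
      exact tsum_ite_eq (0 : Fin m → ℤ) _
    rw [tsum_congr hin, ENNReal.tsum_mul_left]
  have hsum2 : ∑' p : (Fin d → ℤ) × (Fin m → ℤ), Φ2 p = ENNReal.ofReal ((L:ℝ)^(-(2*β))) * ZB := by
    rw [ENNReal.tsum_prod', ENNReal.tsum_comm]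
    have hin : ∀ b : Fin m → ℤ, (∑' a : Fin d → ℤ, Φ2 (a, b)) =
        ENNReal.ofReal ((L:ℝ)^(-(2*β))) * ENNReal.ofReal (euclNorm (fun j => (b j:ℝ)) ^ (-(2*β))) := by
      intro b
      simp only [hΦ2]
      exact tsum_ite_eq (rf b) _
    rw [tsum_congr hin, ENNReal.tsum_mul_left]
  have hsum3 : ∑' p : (Fin d → ℤ) × (Fin m → ℤ), Φ3 p =
      (ENNReal.ofReal ((K:ℝ)^(-(2*α*θ))) * ENNReal.ofReal ((L:ℝ)^(-(2*β*(1-θ))))) * (ZC * ZD) := by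
    rw [ENNReal.tsum_prod', ENNReal.tsum_comm]
    have hin : ∀ b : Fin m → ℤ, (∑' a : Fin d → ℤ, Φ3 (a, b)) =
        ((ENNReal.ofReal ((K:ℝ)^(-(2*α*θ))) * ENNReal.ofReal ((L:ℝ)^(-(2*β*(1-θ)))) *
          ENNReal.ofReal (euclNorm (fun j => (b j:ℝ)) ^ (-(2*β*(1-θ)))))) * ZC := by
      intro b
      simp only [hΦ3]
      rw [ENNReal.tsum_mul_left]
      congr 1
      have := (Equiv.subRight (rf b)).tsum_eq
        (fun u : Fin d → ℤ => ENNReal.ofReal (euclNorm (fun i => (u i:ℝ)) ^ (-(2*α*θ))))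
      simpa [hZC] using this
    rw [tsum_congr hin]
    have hre : ∀ b : Fin m → ℤ,
        ((ENNReal.ofReal ((K:ℝ)^(-(2*α*θ))) * ENNReal.ofReal ((L:ℝ)^(-(2*β*(1-θ)))) *
          ENNReal.ofReal (euclNorm (fun j => (b j:ℝ)) ^ (-(2*β*(1-θ)))))) * ZC =
        ((ENNReal.ofReal ((K:ℝ)^(-(2*α*θ))) * ENNReal.ofReal ((L:ℝ)^(-(2*β*(1-θ))))) * ZC) *
          ENNReal.ofReal (euclNorm (fun j => (b j:ℝ)) ^ (-(2*β*(1-θ)))) := by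
      intro b; ring
    rw [tsum_congr hre, ENNReal.tsum_mul_left]
    ring
  -- the real comparisons of the prefactors
  have hR1pos : (0:ℝ) < (K:ℝ)^(-α) + (L:ℝ)^(-β) := by positivity
  have hcK : (K:ℝ)^(-(2*α)) ≤ ((K:ℝ)^(-α) + (L:ℝ)^(-β))^2 := by
    rw [show -(2*α) = 2*(-α) by ring, rpow_two_eq hKr0.le]
    exact pow_le_pow_left₀ (Real.rpow_nonneg hKr0.le _)
      (le_add_of_nonneg_right (Real.rpow_nonneg hLr0.le _)) 2
  have hcL : (L:ℝ)^(-(2*β)) ≤ ((K:ℝ)^(-α) + (L:ℝ)^(-β))^2 := by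
    rw [show -(2*β) = 2*(-β) by ring, rpow_two_eq hLr0.le]
    exact pow_le_pow_left₀ (Real.rpow_nonneg hLr0.le _)
      (le_add_of_nonneg_left (Real.rpow_nonneg hKr0.le _)) 2
  have hmixKL : (K:ℝ)^(-(2*α*θ)) * (L:ℝ)^(-(2*β*(1-θ))) ≤ ((K:ℝ)^(-α) + (L:ℝ)^(-β))^2 := by
    have e1 : (K:ℝ)^(-(2*α*θ)) = ((K:ℝ)^(-(2*α)))^θ := by
      rw [← Real.rpow_mul hKr0.le]; congr 1; ring
    have e2 : (L:ℝ)^(-(2*β*(1-θ))) = ((L:ℝ)^(-(2*β)))^(1-θ) := by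
      rw [← Real.rpow_mul hLr0.le]; congr 1; ring
    have b1 : ((K:ℝ)^(-(2*α)))^θ ≤ (((K:ℝ)^(-α) + (L:ℝ)^(-β))^2)^θ :=
      Real.rpow_le_rpow (Real.rpow_nonneg hKr0.le _) hcK hθ0.le
    have b2 : ((L:ℝ)^(-(2*β)))^(1-θ) ≤ (((K:ℝ)^(-α) + (L:ℝ)^(-β))^2)^(1-θ) :=
      Real.rpow_le_rpow (Real.rpow_nonneg hLr0.le _) hcL (by linarith)
    have hfin : (((K:ℝ)^(-α) + (L:ℝ)^(-β))^2)^θ * (((K:ℝ)^(-α) + (L:ℝ)^(-β))^2)^(1-θ) =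
        ((K:ℝ)^(-α) + (L:ℝ)^(-β))^2 := by
      rw [← Real.rpow_add (by positivity), show θ + (1-θ) = (1:ℝ) by ring, Real.rpow_one]
    calc (K:ℝ)^(-(2*α*θ)) * (L:ℝ)^(-(2*β*(1-θ)))
        = ((K:ℝ)^(-(2*α)))^θ * ((L:ℝ)^(-(2*β)))^(1-θ) := by rw [e1, e2]
      _ ≤ (((K:ℝ)^(-α) + (L:ℝ)^(-β))^2)^θ * (((K:ℝ)^(-α) + (L:ℝ)^(-β))^2)^(1-θ) :=
          mul_le_mul b1 b2 (Real.rpow_nonneg (Real.rpow_nonneg hLr0.le _) _)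
            (Real.rpow_nonneg (by positivity) _)
      _ = _ := hfin
  -- assemble
  calc ∑' v : {v : Fin (d+m) → ℤ // v ≠ 0},
        (ENNReal.ofReal (wMix d m Q α β (shiftIdx d m K L k v.1)))⁻¹
      ≤ ∑' v : {v : Fin (d+m) → ℤ // v ≠ 0},
        (fun p => Φ1 p + Φ2 p + Φ3 p)
          (((fun i => v.1 (Fin.castAdd m i)), (fun j => v.1 (Fin.natAdd d j))) :
            (Fin d → ℤ) × (Fin m → ℤ)) :=
        ENNReal.tsum_le_tsum (fun v => hptw v.1 v.2)
    _ ≤ ∑' p : (Fin d → ℤ) × (Fin m → ℤ), (Φ1 p + Φ2 p + Φ3 p) :=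
        ENNReal.tsum_comp_le_tsum_of_injective hinj2 _
    _ = (∑' p : (Fin d → ℤ) × (Fin m → ℤ), Φ1 p) + (∑' p : (Fin d → ℤ) × (Fin m → ℤ), Φ2 p) +
        (∑' p : (Fin d → ℤ) × (Fin m → ℤ), Φ3 p) := by
        rw [ENNReal.tsum_add, ENNReal.tsum_add]
    _ = ENNReal.ofReal ((K:ℝ)^(-(2*α))) * ZA + ENNReal.ofReal ((L:ℝ)^(-(2*β))) * ZB +
        (ENNReal.ofReal ((K:ℝ)^(-(2*α*θ))) * ENNReal.ofReal ((L:ℝ)^(-(2*β*(1-θ))))) * (ZC * ZD) := by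
        rw [hsum1, hsum2, hsum3]
    _ ≤ ENNReal.ofReal (((K:ℝ)^(-α) + (L:ℝ)^(-β))^2) * ZA +
        ENNReal.ofReal (((K:ℝ)^(-α) + (L:ℝ)^(-β))^2) * ZB +
        ENNReal.ofReal (((K:ℝ)^(-α) + (L:ℝ)^(-β))^2) * (ZC * ZD) := by
        refine add_le_add (add_le_add ?_ ?_) ?_
        · exact mul_le_mul' (ENNReal.ofReal_le_ofReal hcK) le_rfl
        · exact mul_le_mul' (ENNReal.ofReal_le_ofReal hcL) le_rfl
        · refine mul_le_mul' ?_ le_rfl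
          rw [← ENNReal.ofReal_mul (Real.rpow_nonneg hKr0.le _)]
          exact ENNReal.ofReal_le_ofReal hmixKL
    _ = ENNReal.ofReal (((K:ℝ)^(-α) + (L:ℝ)^(-β))^2) * (ZA + ZB + ZC * ZD) := by ring
lemma wMix_def (d m : ℕ) (Q : Matrix (Fin d) (Fin m) ℝ) (γ δ : ℝ) (k : Fin (d+m) → ℤ) :
    wMix d m Q γ δ k =
      euclNorm ((fun i => (k (Fin.castAdd m i) : ℝ)) +
        Q.mulVec fun j => (k (Fin.natAdd d j) : ℝ)) ^ (2 * γ) +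
      euclNorm (fun j => (k (Fin.natAdd d j) : ℝ)) ^ (2 * δ) := rfl

lemma int_resolve_real {Kn : ℕ} (hK : 0 < Kn) {x1 x2 : ℝ} {a b s t : ℤ}
    (h11 : -(Kn:ℝ) ≤ x1) (h12 : x1 < Kn) (h21 : -(Kn:ℝ) ≤ x2) (h22 : x2 < Kn)
    (hd : x1 - x2 = ((a - b : ℤ):ℝ))
    (h : a + 2*(Kn:ℤ)*s = b + 2*(Kn:ℤ)*t) : a = b ∧ s = t := by
  have hab : a - b = 2*(Kn:ℤ)*(t - s) := by rw [mul_sub]; linarith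
  have habs_real : |x1 - x2| < 2*(Kn:ℝ) := by
    rw [abs_lt]; constructor <;> linarith
  rw [hd] at habs_real
  have hcast : |((a - b:ℤ):ℝ)| = ((|a - b|:ℤ):ℝ) := by push_cast; ring
  rw [hcast] at habs_real
  have habs_int : |a - b| < 2*(Kn:ℤ) := by exact_mod_cast habs_real
  have hKz : (0:ℤ) < (Kn:ℤ) := by exact_mod_cast hK
  rw [hab, abs_mul, abs_of_pos (by linarith : (0:ℤ) < 2*(Kn:ℤ))] at habs_int
  have hts : |t - s| < 1 := by nlinarith [abs_nonneg (t-s)]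
  have h0 : t - s = 0 := Int.abs_lt_one_iff.mp hts
  have hst : s = t := by omega
  refine ⟨?_, hst⟩
  have : a - b = 0 := by rw [hab, h0, mul_zero]
  omega

/-- interpolation error bound in the mixed seminorm. With
`M = Σ_k (‖k_I + Q k_II‖^(2α) + ‖k_II‖^(2β))|c_k|² < ∞` and error coefficients
`e_k = -Σ_{v ≠ 0} c_{(k_I+2K v_I, k_II+2L v_II)}` for `k ∈ 𝒦_{K,L}`, `e_k = c_k` otherwise,
`(Σ_k (‖k_I + Q k_II‖^(2μ) + ‖k_II‖^(2ν))|e_k|²)^{1/2} ≤ C (K^{-α}+L^{-β})(K^μ+L^ν) M^{1/2}`. -/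
theorem stmt16 (d m : ℕ) (hd : 1 ≤ d) (hm : 1 ≤ m)
    (P : Matrix (Fin d) (Fin (d + m)) ℝ)
    (PI : Matrix (Fin d) (Fin d) ℝ) (hPI : PI = P.submatrix id (Fin.castAdd m))
    (PII : Matrix (Fin d) (Fin m) ℝ) (hPII : PII = P.submatrix id (Fin.natAdd d))
    (hinv : IsUnit PI)
    (Q : Matrix (Fin d) (Fin m) ℝ) (hQ : Q = PI⁻¹ * PII)
    (α β μ ν : ℝ)
    (hβ : (m : ℝ) / 2 < β) (hαβ : β ≤ α) (hα : (d : ℝ) / 2 < α)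
    (hcond : (d : ℝ) / (2 * α) + (m : ℝ) / (2 * β) < 1)
    (hμ0 : 0 ≤ μ) (hμ : μ ≤ α) (hν0 : 0 ≤ ν) (hν : ν ≤ β) :
    ∃ C : ℝ, 0 < C ∧ ∀ K L : ℕ, 0 < K → 0 < L →
      ∀ c e : (Fin (d + m) → ℤ) → ℂ,
        (∑' k : Fin (d + m) → ℤ, ENNReal.ofReal (wMix d m Q α β k * ‖c k‖ ^ 2)) ≠ ⊤ →
        (∀ k : Fin (d + m) → ℤ, memK d m Q K L k →
          e k = -∑' v : {v : Fin (d + m) → ℤ // v ≠ 0}, c (shiftIdx d m K L k v.1)) →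
        (∀ k : Fin (d + m) → ℤ, ¬ memK d m Q K L k → e k = c k) →
        (∑' k : Fin (d + m) → ℤ,
            ENNReal.ofReal (wMix d m Q μ ν k * ‖e k‖ ^ 2)) ^ ((1 : ℝ) / 2) ≤
          ENNReal.ofReal (C * ((K : ℝ) ^ (-α) + (L : ℝ) ^ (-β)) * ((K : ℝ) ^ μ + (L : ℝ) ^ ν)) *
            (∑' k : Fin (d + m) → ℤ,
              ENNReal.ofReal (wMix d m Q α β k * ‖c k‖ ^ 2)) ^ ((1 : ℝ) / 2) := by
  classical
  have hd0 : (0:ℝ) < d := by exact_mod_cast hd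
  have hm0 : (0:ℝ) < m := by exact_mod_cast hm
  have hα0 : (0:ℝ) < α := by linarith
  have hβ0 : (0:ℝ) < β := by linarith
  set θ : ℝ := ((d/(2*α)) + (1 - m/(2*β)))/2 with hθdef
  have hfrac1 : (0:ℝ) < d/(2*α) := by positivity
  have hfrac2 : (0:ℝ) < m/(2*β) := by positivity
  have hθa : (d:ℝ)/(2*α) < θ := by rw [hθdef]; linarith
  have hθb : θ < 1 - (m:ℝ)/(2*β) := by rw [hθdef]; linarith
  have hθ0 : 0 < θ := lt_trans hfrac1 hθa
  have hθ1 : θ < 1 := by linarith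
  have hdθ : (d:ℝ) < 2*α*θ := by
    have h' := (div_lt_iff₀ (by positivity : (0:ℝ) < 2*α)).mp hθa
    calc (d:ℝ) < θ*(2*α) := h'
      _ = 2*α*θ := by ring
  have hmθ : (m:ℝ) < 2*β*(1-θ) := by
    have h2 : (m:ℝ)/(2*β) < 1-θ := by linarith
    have h' := (div_lt_iff₀ (by positivity : (0:ℝ) < 2*β)).mp h2
    calc (m:ℝ) < (1-θ)*(2*β) := h'
      _ = 2*β*(1-θ) := by ring
  have hdα : (d:ℝ) < 2*α := by linarith
  have hmβ : (m:ℝ) < 2*β := by linarith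
  have hZA : (∑' x : Fin d → ℤ, ENNReal.ofReal (euclNorm (fun i => (x i:ℝ)) ^ (-(2*α)))) ≠ ⊤ :=
    zetaE_lt_top d hd hdα
  have hZB : (∑' y : Fin m → ℤ, ENNReal.ofReal (euclNorm (fun j => (y j:ℝ)) ^ (-(2*β)))) ≠ ⊤ :=
    zetaE_lt_top m hm hmβ
  have hZC : (∑' x : Fin d → ℤ, ENNReal.ofReal (euclNorm (fun i => (x i:ℝ)) ^ (-(2*α*θ)))) ≠ ⊤ :=
    zetaE_lt_top d hd hdθ
  have hZD : (∑' y : Fin m → ℤ,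
      ENNReal.ofReal (euclNorm (fun j => (y j:ℝ)) ^ (-(2*β*(1-θ))))) ≠ ⊤ :=
    zetaE_lt_top m hm hmθ
  set Zs : ℝ≥0∞ :=
    (∑' x : Fin d → ℤ, ENNReal.ofReal (euclNorm (fun i => (x i:ℝ)) ^ (-(2*α)))) +
    (∑' y : Fin m → ℤ, ENNReal.ofReal (euclNorm (fun j => (y j:ℝ)) ^ (-(2*β)))) +
    (∑' x : Fin d → ℤ, ENNReal.ofReal (euclNorm (fun i => (x i:ℝ)) ^ (-(2*α*θ)))) *
    (∑' y : Fin m → ℤ, ENNReal.ofReal (euclNorm (fun j => (y j:ℝ)) ^ (-(2*β*(1-θ))))) with hZs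
  have hZsne : Zs ≠ ⊤ := by
    rw [hZs]
    exact ENNReal.add_ne_top.mpr ⟨ENNReal.add_ne_top.mpr ⟨hZA, hZB⟩, ENNReal.mul_ne_top hZC hZD⟩
  set Econst : ℝ≥0∞ := 2 + ENNReal.ofReal ((d:ℝ)^μ + (m:ℝ)^ν) * Zs with hEconst
  have hEne : Econst ≠ ⊤ := by
    rw [hEconst]
    exact ENNReal.add_ne_top.mpr ⟨ENNReal.ofNat_ne_top,
      ENNReal.mul_ne_top ENNReal.ofReal_ne_top hZsne⟩
  have hCmax : (1:ℝ) ≤ max 1 Econst.toReal := le_max_left _ _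
  refine ⟨Real.sqrt (max 1 Econst.toReal), Real.sqrt_pos.mpr (by linarith), ?_⟩
  intro K L hK hL c e hM he1 he2
  have hKr1 : (1:ℝ) ≤ (K:ℝ) := by exact_mod_cast hK
  have hLr1 : (1:ℝ) ≤ (L:ℝ) := by exact_mod_cast hL
  have hKr0 : (0:ℝ) < K := by linarith
  have hLr0 : (0:ℝ) < L := by linarith
  -- outside pointwise bound
  have hOUTpt : ∀ kk : Fin (d+m) → ℤ, ¬ memK d m Q K L kk →
      ENNReal.ofReal (wMix d m Q μ ν kk * ‖e kk‖ ^ 2) ≤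
        ENNReal.ofReal (2*(((K:ℝ)^(-α)+(L:ℝ)^(-β))*((K:ℝ)^μ+(L:ℝ)^ν))^2) *
        ENNReal.ofReal (wMix d m Q α β kk * ‖c kk‖ ^ 2) := by
    intro kk hko
    rw [he2 kk hko]
    have hout : (K:ℝ) ≤ euclNorm ((fun i => (kk (Fin.castAdd m i):ℝ)) +
          Q.mulVec fun j => (kk (Fin.natAdd d j):ℝ)) ∨
        (L:ℝ) ≤ euclNorm (fun j => (kk (Fin.natAdd d j):ℝ)) := by
      rcases not_and_or.mp hko with h | h
      · left
        push_neg at h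
        obtain ⟨i, hi⟩ := h
        have hcomp : ((fun i => (kk (Fin.castAdd m i):ℝ)) +
            Q.mulVec fun j => (kk (Fin.natAdd d j):ℝ)) i =
            (kk (Fin.castAdd m i):ℝ) + Q.mulVec (fun j => (kk (Fin.natAdd d j):ℝ)) i := rfl
        have habs : (K:ℝ) ≤ |((fun i => (kk (Fin.castAdd m i):ℝ)) +
            Q.mulVec fun j => (kk (Fin.natAdd d j):ℝ)) i| := by
          rw [hcomp]
          rcases le_or_gt (-(K:ℝ))
            ((kk (Fin.castAdd m i):ℝ) + Q.mulVec (fun j => (kk (Fin.natAdd d j):ℝ)) i) with hc | hc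
          · exact le_abs.mpr (Or.inl (hi hc))
          · exact le_abs.mpr (Or.inr (by linarith))
        exact le_trans habs (abs_le_euclNorm _ i)
      · right
        push_neg at h
        obtain ⟨j, hj⟩ := h
        have habs : (L:ℝ) ≤ |(kk (Fin.natAdd d j):ℝ)| := by
          rcases le_or_gt (-(L:ℤ)) (kk (Fin.natAdd d j)) with hc | hc
          · exact le_abs.mpr (Or.inl (by exact_mod_cast hj hc))
          · refine le_abs.mpr (Or.inr ?_)
            have h3 : (kk (Fin.natAdd d j):ℝ) < -(L:ℝ) := by exact_mod_cast hc
            linarith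
        exact le_trans habs (abs_le_euclNorm (fun j => (kk (Fin.natAdd d j):ℝ)) j)
    have hreal : wMix d m Q μ ν kk * ‖c kk‖ ^ 2 ≤
        (2*(((K:ℝ)^(-α)+(L:ℝ)^(-β))*((K:ℝ)^μ+(L:ℝ)^ν))^2) *
          (wMix d m Q α β kk * ‖c kk‖ ^ 2) := by
      have hw := weight_out (euclNorm_nonneg ((fun i => (kk (Fin.castAdd m i):ℝ)) +
          Q.mulVec fun j => (kk (Fin.natAdd d j):ℝ)))
        (euclNorm_nonneg (fun j => (kk (Fin.natAdd d j):ℝ))) hKr1 hLr1 hμ0 hμ hν0 hν hout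
      have hn : (0:ℝ) ≤ ‖c kk‖ ^ 2 := by positivity
      rw [wMix_def d m Q μ ν kk, wMix_def d m Q α β kk]
      calc (euclNorm ((fun i => (kk (Fin.castAdd m i):ℝ)) +
              Q.mulVec fun j => (kk (Fin.natAdd d j):ℝ)) ^ (2*μ) +
            euclNorm (fun j => (kk (Fin.natAdd d j):ℝ)) ^ (2*ν)) * ‖c kk‖ ^ 2
          ≤ (2*(((K:ℝ)^(-α)+(L:ℝ)^(-β))*((K:ℝ)^μ+(L:ℝ)^ν))^2 *
              (euclNorm ((fun i => (kk (Fin.castAdd m i):ℝ)) +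
                Q.mulVec fun j => (kk (Fin.natAdd d j):ℝ)) ^ (2*α) +
               euclNorm (fun j => (kk (Fin.natAdd d j):ℝ)) ^ (2*β))) * ‖c kk‖ ^ 2 :=
            mul_le_mul_of_nonneg_right hw hn
        _ = _ := by ring
    calc ENNReal.ofReal (wMix d m Q μ ν kk * ‖c kk‖ ^ 2)
        ≤ ENNReal.ofReal ((2*(((K:ℝ)^(-α)+(L:ℝ)^(-β))*((K:ℝ)^μ+(L:ℝ)^ν))^2) *
            (wMix d m Q α β kk * ‖c kk‖ ^ 2)) := ENNReal.ofReal_le_ofReal hreal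
      _ = _ := ENNReal.ofReal_mul (by positivity)
  -- inside pointwise bound
  have hINpt : ∀ kk : Fin (d+m) → ℤ, memK d m Q K L kk →
      ENNReal.ofReal (wMix d m Q μ ν kk * ‖e kk‖ ^ 2) ≤
        (ENNReal.ofReal (((d:ℝ)^μ + (m:ℝ)^ν) * ((K:ℝ)^μ+(L:ℝ)^ν)^2) *
          (ENNReal.ofReal (((K:ℝ)^(-α)+(L:ℝ)^(-β))^2) * Zs)) *
        ∑' v : {v : Fin (d+m) → ℤ // v ≠ 0},
          ENNReal.ofReal (wMix d m Q α β (shiftIdx d m K L kk v.1) *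
            ‖c (shiftIdx d m K L kk v.1)‖ ^ 2) := by
    intro kk hk
    obtain ⟨hwpos, hsumb⟩ :=
      aliasing_core d m Q K L α β θ hα0 hβ0 hθ0 hθ1 hKr1 hLr1 kk hk
    rw [ENNReal.ofReal_mul (wMix_nonneg d m Q μ ν kk), ENNReal.ofReal_pow (norm_nonneg _)]
    have hwub : ENNReal.ofReal (wMix d m Q μ ν kk) ≤
        ENNReal.ofReal (((d:ℝ)^μ + (m:ℝ)^ν) * ((K:ℝ)^μ+(L:ℝ)^ν)^2) := by
      apply ENNReal.ofReal_le_ofReal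
      rw [wMix_def d m Q μ ν kk]
      have h1 := in_weight_bound (p := d) hKr0.le hμ0
        (x := (fun i => (kk (Fin.castAdd m i):ℝ)) + Q.mulVec fun j => (kk (Fin.natAdd d j):ℝ))
        (fun i => abs_le.mpr ⟨(hk.1 i).1, (hk.1 i).2.le⟩)
      have h2 := in_weight_bound (p := m) hLr0.le hν0
        (x := fun j => (kk (Fin.natAdd d j):ℝ))
        (fun j => by
          have ha : -(L:ℝ) ≤ (kk (Fin.natAdd d j):ℝ) := by exact_mod_cast (hk.2 j).1
          have hb : (kk (Fin.natAdd d j):ℝ) ≤ (L:ℝ) := by exact_mod_cast (hk.2 j).2.le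
          exact abs_le.mpr ⟨ha, hb⟩)
      have h3 : ((K:ℝ)^μ)^2 ≤ ((K:ℝ)^μ+(L:ℝ)^ν)^2 :=
        pow_le_pow_left₀ (Real.rpow_nonneg hKr0.le _)
          (le_add_of_nonneg_right (Real.rpow_nonneg hLr0.le _)) 2
      have h4 : ((L:ℝ)^ν)^2 ≤ ((K:ℝ)^μ+(L:ℝ)^ν)^2 :=
        pow_le_pow_left₀ (Real.rpow_nonneg hLr0.le _)
          (le_add_of_nonneg_left (Real.rpow_nonneg hKr0.le _)) 2
      have hd1 : (0:ℝ) ≤ (d:ℝ)^μ := Real.rpow_nonneg hd0.le _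
      have hm1 : (0:ℝ) ≤ (m:ℝ)^ν := Real.rpow_nonneg hm0.le _
      have h5 := le_trans h1 (mul_le_mul_of_nonneg_left h3 hd1)
      have h6 := le_trans h2 (mul_le_mul_of_nonneg_left h4 hm1)
      calc euclNorm ((fun i => (kk (Fin.castAdd m i):ℝ)) +
              Q.mulVec fun j => (kk (Fin.natAdd d j):ℝ)) ^ (2*μ) +
            euclNorm (fun j => (kk (Fin.natAdd d j):ℝ)) ^ (2*ν)
          ≤ (d:ℝ)^μ * ((K:ℝ)^μ+(L:ℝ)^ν)^2 + (m:ℝ)^ν * ((K:ℝ)^μ+(L:ℝ)^ν)^2 := add_le_add h5 h6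
        _ = _ := by ring
    have hWne : ∀ v : {v : Fin (d+m) → ℤ // v ≠ 0},
        ENNReal.ofReal (wMix d m Q α β (shiftIdx d m K L kk v.1)) ≠ 0 :=
      fun v => (ENNReal.ofReal_pos.mpr (hwpos v.1 v.2)).ne'
    have hGeq : ∀ v : {v : Fin (d+m) → ℤ // v ≠ 0},
        ENNReal.ofReal (wMix d m Q α β (shiftIdx d m K L kk v.1) *
          ‖c (shiftIdx d m K L kk v.1)‖ ^ 2) =
        ENNReal.ofReal (wMix d m Q α β (shiftIdx d m K L kk v.1)) *
          (ENNReal.ofReal ‖c (shiftIdx d m K L kk v.1)‖)^2 := fun v => by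
      rw [ENNReal.ofReal_mul (wMix_nonneg d m Q α β _), ENNReal.ofReal_pow (norm_nonneg _)]
    have hstep1 : ENNReal.ofReal ‖e kk‖ ≤
        ∑' v : {v : Fin (d+m) → ℤ // v ≠ 0},
          ENNReal.ofReal ‖c (shiftIdx d m K L kk v.1)‖ := by
      rw [he1 kk hk, norm_neg]
      by_cases hsummable : Summable (fun v : {v : Fin (d+m) → ℤ // v ≠ 0} =>
        c (shiftIdx d m K L kk v.1))
      · have hsn : Summable (fun v : {v : Fin (d+m) → ℤ // v ≠ 0} =>
            ‖c (shiftIdx d m K L kk v.1)‖) := summable_norm_iff.mpr hsummable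
        calc ENNReal.ofReal ‖∑' v : {v : Fin (d+m) → ℤ // v ≠ 0},
                c (shiftIdx d m K L kk v.1)‖
            ≤ ENNReal.ofReal (∑' v : {v : Fin (d+m) → ℤ // v ≠ 0},
                ‖c (shiftIdx d m K L kk v.1)‖) :=
              ENNReal.ofReal_le_ofReal (norm_tsum_le_tsum_norm hsn)
          _ = _ := ENNReal.ofReal_tsum_of_nonneg (fun v => norm_nonneg _) hsn
      · rw [tsum_eq_zero_of_not_summable hsummable]
        simp
    have hCSeq : ∀ v : {v : Fin (d+m) → ℤ // v ≠ 0},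
        ENNReal.ofReal ‖c (shiftIdx d m K L kk v.1)‖ =
        ((ENNReal.ofReal (wMix d m Q α β (shiftIdx d m K L kk v.1)))⁻¹)^((1:ℝ)/2) *
          (ENNReal.ofReal (wMix d m Q α β (shiftIdx d m K L kk v.1) *
            ‖c (shiftIdx d m K L kk v.1)‖ ^ 2))^((1:ℝ)/2) := by
      intro v
      rw [hGeq v, ← ENNReal.mul_rpow_of_nonneg _ _ (by norm_num : (0:ℝ) ≤ 1/2),
        ← mul_assoc, ENNReal.inv_mul_cancel (hWne v) ENNReal.ofReal_ne_top, one_mul,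
        ← ENNReal.rpow_natCast (ENNReal.ofReal ‖c (shiftIdx d m K L kk v.1)‖) 2,
        ← ENNReal.rpow_mul]
      norm_num
    have hstep2 : (∑' v : {v : Fin (d+m) → ℤ // v ≠ 0},
          ENNReal.ofReal ‖c (shiftIdx d m K L kk v.1)‖) ≤
        (∑' v : {v : Fin (d+m) → ℤ // v ≠ 0},
          (ENNReal.ofReal (wMix d m Q α β (shiftIdx d m K L kk v.1)))⁻¹)^((1:ℝ)/2) *
        (∑' v : {v : Fin (d+m) → ℤ // v ≠ 0},
          ENNReal.ofReal (wMix d m Q α β (shiftIdx d m K L kk v.1) *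
            ‖c (shiftIdx d m K L kk v.1)‖ ^ 2))^((1:ℝ)/2) := by
      rw [tsum_congr hCSeq]
      refine le_trans (tsum_CS _ _) ?_
      have h1 : ∀ v : {v : Fin (d+m) → ℤ // v ≠ 0},
          (((ENNReal.ofReal (wMix d m Q α β (shiftIdx d m K L kk v.1)))⁻¹)^((1:ℝ)/2))^(2:ℝ) =
          (ENNReal.ofReal (wMix d m Q α β (shiftIdx d m K L kk v.1)))⁻¹ := fun v => by
        rw [← ENNReal.rpow_mul]; norm_num
      have h2 : ∀ v : {v : Fin (d+m) → ℤ // v ≠ 0},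
          ((ENNReal.ofReal (wMix d m Q α β (shiftIdx d m K L kk v.1) *
            ‖c (shiftIdx d m K L kk v.1)‖ ^ 2))^((1:ℝ)/2))^(2:ℝ) =
          ENNReal.ofReal (wMix d m Q α β (shiftIdx d m K L kk v.1) *
            ‖c (shiftIdx d m K L kk v.1)‖ ^ 2) := fun v => by
        rw [← ENNReal.rpow_mul]; norm_num
      rw [tsum_congr h1, tsum_congr h2]
    have hsq : (ENNReal.ofReal ‖e kk‖)^2 ≤
        (∑' v : {v : Fin (d+m) → ℤ // v ≠ 0},
          (ENNReal.ofReal (wMix d m Q α β (shiftIdx d m K L kk v.1)))⁻¹) *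
        (∑' v : {v : Fin (d+m) → ℤ // v ≠ 0},
          ENNReal.ofReal (wMix d m Q α β (shiftIdx d m K L kk v.1) *
            ‖c (shiftIdx d m K L kk v.1)‖ ^ 2)) := by
      have hle := hstep1.trans hstep2
      calc (ENNReal.ofReal ‖e kk‖)^2
          ≤ ((∑' v : {v : Fin (d+m) → ℤ // v ≠ 0},
              (ENNReal.ofReal (wMix d m Q α β (shiftIdx d m K L kk v.1)))⁻¹)^((1:ℝ)/2) *
            (∑' v : {v : Fin (d+m) → ℤ // v ≠ 0},
              ENNReal.ofReal (wMix d m Q α β (shiftIdx d m K L kk v.1) *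
                ‖c (shiftIdx d m K L kk v.1)‖ ^ 2))^((1:ℝ)/2))^2 := by
            rw [pow_two, pow_two]; exact mul_le_mul' hle hle
        _ = _ := by
            rw [mul_pow]
            congr 1 <;>
              (rw [← ENNReal.rpow_natCast _ 2, ← ENNReal.rpow_mul]; norm_num)
    calc ENNReal.ofReal (wMix d m Q μ ν kk) * (ENNReal.ofReal ‖e kk‖)^2
        ≤ ENNReal.ofReal (((d:ℝ)^μ + (m:ℝ)^ν) * ((K:ℝ)^μ+(L:ℝ)^ν)^2) *
          ((∑' v : {v : Fin (d+m) → ℤ // v ≠ 0},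
            (ENNReal.ofReal (wMix d m Q α β (shiftIdx d m K L kk v.1)))⁻¹) *
          (∑' v : {v : Fin (d+m) → ℤ // v ≠ 0},
            ENNReal.ofReal (wMix d m Q α β (shiftIdx d m K L kk v.1) *
              ‖c (shiftIdx d m K L kk v.1)‖ ^ 2))) := mul_le_mul' hwub hsq
      _ ≤ ENNReal.ofReal (((d:ℝ)^μ + (m:ℝ)^ν) * ((K:ℝ)^μ+(L:ℝ)^ν)^2) *
          ((ENNReal.ofReal (((K:ℝ)^(-α)+(L:ℝ)^(-β))^2) * Zs) *
          (∑' v : {v : Fin (d+m) → ℤ // v ≠ 0},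
            ENNReal.ofReal (wMix d m Q α β (shiftIdx d m K L kk v.1) *
              ‖c (shiftIdx d m K L kk v.1)‖ ^ 2))) := by
          refine mul_le_mul' le_rfl (mul_le_mul' ?_ le_rfl)
          rw [hZs]
          exact hsumb
      _ = _ := by ring
  -- split the sum
  set S : Set (Fin (d+m) → ℤ) := {kk | memK d m Q K L kk} with hS
  have hsplit : (∑' k : Fin (d+m) → ℤ, ENNReal.ofReal (wMix d m Q μ ν k * ‖e k‖ ^ 2)) =
      (∑' k : ↥S, ENNReal.ofReal (wMix d m Q μ ν k.1 * ‖e k.1‖ ^ 2)) +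
      (∑' k : ↥Sᶜ, ENNReal.ofReal (wMix d m Q μ ν k.1 * ‖e k.1‖ ^ 2)) :=
    (Summable.tsum_add_tsum_compl ENNReal.summable ENNReal.summable).symm
  -- inside sum
  have hinj : Function.Injective
      (fun q : ↥S × {v : Fin (d+m) → ℤ // v ≠ 0} => shiftIdx d m K L q.1.1 q.2.1) := by
    rintro ⟨⟨k1, hk1⟩, ⟨v1, hv1⟩⟩ ⟨⟨k2, hk2⟩, ⟨v2, hv2⟩⟩ h
    simp only at h
    have hk1' : memK d m Q K L k1 := hk1
    have hk2' : memK d m Q K L k2 := hk2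
    have hIIeq : ∀ j, k1 (Fin.natAdd d j) = k2 (Fin.natAdd d j) ∧
        v1 (Fin.natAdd d j) = v2 (Fin.natAdd d j) := by
      intro j
      have hj := congrFun h (Fin.natAdd d j)
      simp only [shiftIdx, Fin.append_right] at hj
      exact int_resolve (by exact_mod_cast hL) (hk1'.2 j).1 (hk1'.2 j).2
        (hk2'.2 j).1 (hk2'.2 j).2 hj
    have hk12II : (fun j => (k1 (Fin.natAdd d j):ℝ)) = (fun j => (k2 (Fin.natAdd d j):ℝ)) := by
      funext j; rw [(hIIeq j).1]
    have hIeq : ∀ i, k1 (Fin.castAdd m i) = k2 (Fin.castAdd m i) ∧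
        v1 (Fin.castAdd m i) = v2 (Fin.castAdd m i) := by
      intro i
      have hi := congrFun h (Fin.castAdd m i)
      simp only [shiftIdx, Fin.append_left] at hi
      have hmv : Q.mulVec (fun j => (k1 (Fin.natAdd d j):ℝ)) i =
          Q.mulVec (fun j => (k2 (Fin.natAdd d j):ℝ)) i := by rw [hk12II]
      refine int_resolve_real hK (hk1'.1 i).1 (hk1'.1 i).2 (hk2'.1 i).1 (hk2'.1 i).2 ?_ hi
      rw [hmv]
      push_cast
      ring
    have hkeq : k1 = k2 := funext fun x =>
      Fin.addCases (fun i => (hIeq i).1) (fun j => (hIIeq j).1) x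
    have hveq : v1 = v2 := funext fun x =>
      Fin.addCases (fun i => (hIeq i).2) (fun j => (hIIeq j).2) x
    simp [Prod.ext_iff, Subtype.ext_iff, hkeq, hveq]
  have hIN : (∑' k : ↥S, ENNReal.ofReal (wMix d m Q μ ν k.1 * ‖e k.1‖ ^ 2)) ≤
      (ENNReal.ofReal (((d:ℝ)^μ + (m:ℝ)^ν) * ((K:ℝ)^μ+(L:ℝ)^ν)^2) *
        (ENNReal.ofReal (((K:ℝ)^(-α)+(L:ℝ)^(-β))^2) * Zs)) *
      (∑' k : Fin (d+m) → ℤ, ENNReal.ofReal (wMix d m Q α β k * ‖c k‖ ^ 2)) := by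
    calc (∑' k : ↥S, ENNReal.ofReal (wMix d m Q μ ν k.1 * ‖e k.1‖ ^ 2))
        ≤ ∑' k : ↥S, ((ENNReal.ofReal (((d:ℝ)^μ + (m:ℝ)^ν) * ((K:ℝ)^μ+(L:ℝ)^ν)^2) *
            (ENNReal.ofReal (((K:ℝ)^(-α)+(L:ℝ)^(-β))^2) * Zs)) *
          ∑' v : {v : Fin (d+m) → ℤ // v ≠ 0},
            ENNReal.ofReal (wMix d m Q α β (shiftIdx d m K L k.1 v.1) *
              ‖c (shiftIdx d m K L k.1 v.1)‖ ^ 2)) :=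
          ENNReal.tsum_le_tsum (fun k => hINpt k.1 k.2)
      _ = (ENNReal.ofReal (((d:ℝ)^μ + (m:ℝ)^ν) * ((K:ℝ)^μ+(L:ℝ)^ν)^2) *
            (ENNReal.ofReal (((K:ℝ)^(-α)+(L:ℝ)^(-β))^2) * Zs)) *
          ∑' k : ↥S, ∑' v : {v : Fin (d+m) → ℤ // v ≠ 0},
            ENNReal.ofReal (wMix d m Q α β (shiftIdx d m K L k.1 v.1) *
              ‖c (shiftIdx d m K L k.1 v.1)‖ ^ 2) := ENNReal.tsum_mul_left
      _ ≤ _ := by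
          refine mul_le_mul' le_rfl ?_
          refine le_trans (le_of_eq (ENNReal.tsum_prod
            (f := fun (k : ↥S) (v : {v : Fin (d+m) → ℤ // v ≠ 0}) =>
              ENNReal.ofReal (wMix d m Q α β (shiftIdx d m K L k.1 v.1) *
                ‖c (shiftIdx d m K L k.1 v.1)‖ ^ 2))).symm) ?_
          exact ENNReal.tsum_comp_le_tsum_of_injective hinj
            (fun j => ENNReal.ofReal (wMix d m Q α β j * ‖c j‖ ^ 2))
  have hOUT : (∑' k : ↥Sᶜ, ENNReal.ofReal (wMix d m Q μ ν k.1 * ‖e k.1‖ ^ 2)) ≤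
      ENNReal.ofReal (2*(((K:ℝ)^(-α)+(L:ℝ)^(-β))*((K:ℝ)^μ+(L:ℝ)^ν))^2) *
      (∑' k : Fin (d+m) → ℤ, ENNReal.ofReal (wMix d m Q α β k * ‖c k‖ ^ 2)) := by
    calc (∑' k : ↥Sᶜ, ENNReal.ofReal (wMix d m Q μ ν k.1 * ‖e k.1‖ ^ 2))
        ≤ ∑' k : ↥Sᶜ, ENNReal.ofReal (2*(((K:ℝ)^(-α)+(L:ℝ)^(-β))*((K:ℝ)^μ+(L:ℝ)^ν))^2) *
            ENNReal.ofReal (wMix d m Q α β k.1 * ‖c k.1‖ ^ 2) :=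
          ENNReal.tsum_le_tsum (fun k => hOUTpt k.1 k.2)
      _ = ENNReal.ofReal (2*(((K:ℝ)^(-α)+(L:ℝ)^(-β))*((K:ℝ)^μ+(L:ℝ)^ν))^2) *
          ∑' k : ↥Sᶜ, ENNReal.ofReal (wMix d m Q α β k.1 * ‖c k.1‖ ^ 2) := ENNReal.tsum_mul_left
      _ ≤ _ := by
          refine mul_le_mul' le_rfl ?_
          exact ENNReal.tsum_comp_le_tsum_of_injective Subtype.coe_injective
            (fun j => ENNReal.ofReal (wMix d m Q α β j * ‖c j‖ ^ 2))
  -- combine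
  have hcollect : (ENNReal.ofReal (((d:ℝ)^μ + (m:ℝ)^ν) * ((K:ℝ)^μ+(L:ℝ)^ν)^2) *
        (ENNReal.ofReal (((K:ℝ)^(-α)+(L:ℝ)^(-β))^2) * Zs)) +
      ENNReal.ofReal (2*(((K:ℝ)^(-α)+(L:ℝ)^(-β))*((K:ℝ)^μ+(L:ℝ)^ν))^2) =
      Econst * ENNReal.ofReal ((((K:ℝ)^(-α)+(L:ℝ)^(-β))*((K:ℝ)^μ+(L:ℝ)^ν))^2) := by
    have hdm : (0:ℝ) ≤ (d:ℝ)^μ + (m:ℝ)^ν := by positivity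
    have e1 : ENNReal.ofReal (((d:ℝ)^μ + (m:ℝ)^ν) * ((K:ℝ)^μ+(L:ℝ)^ν)^2) =
        ENNReal.ofReal ((d:ℝ)^μ + (m:ℝ)^ν) * ENNReal.ofReal (((K:ℝ)^μ+(L:ℝ)^ν)^2) :=
      ENNReal.ofReal_mul hdm
    have e2 : ENNReal.ofReal (((K:ℝ)^(-α)+(L:ℝ)^(-β))^2) *
        ENNReal.ofReal (((K:ℝ)^μ+(L:ℝ)^ν)^2) =
        ENNReal.ofReal ((((K:ℝ)^(-α)+(L:ℝ)^(-β))*((K:ℝ)^μ+(L:ℝ)^ν))^2) := by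
      rw [← ENNReal.ofReal_mul (by positivity)]
      congr 1
      ring
    have e3 : ENNReal.ofReal (2*(((K:ℝ)^(-α)+(L:ℝ)^(-β))*((K:ℝ)^μ+(L:ℝ)^ν))^2) =
        2 * ENNReal.ofReal ((((K:ℝ)^(-α)+(L:ℝ)^(-β))*((K:ℝ)^μ+(L:ℝ)^ν))^2) := by
      rw [ENNReal.ofReal_mul (by norm_num : (0:ℝ) ≤ 2), ENNReal.ofReal_ofNat]
    rw [hEconst, e1, e3, ← e2]
    ring
  have KEY : (∑' k : Fin (d+m) → ℤ, ENNReal.ofReal (wMix d m Q μ ν k * ‖e k‖ ^ 2)) ≤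
      Econst * ENNReal.ofReal ((((K:ℝ)^(-α)+(L:ℝ)^(-β))*((K:ℝ)^μ+(L:ℝ)^ν))^2) *
      (∑' k : Fin (d+m) → ℤ, ENNReal.ofReal (wMix d m Q α β k * ‖c k‖ ^ 2)) := by
    rw [hsplit, ← hcollect, add_mul]
    exact add_le_add hIN hOUT
  -- conclude
  have hCpos : (0:ℝ) ≤ Real.sqrt (max 1 Econst.toReal) := Real.sqrt_nonneg _
  have hC2 : Real.sqrt (max 1 Econst.toReal) ^ 2 = max 1 Econst.toReal :=
    Real.sq_sqrt (by linarith)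
  have hEC : Econst ≤ ENNReal.ofReal (Real.sqrt (max 1 Econst.toReal) ^ 2) := by
    rw [hC2]
    calc Econst = ENNReal.ofReal Econst.toReal := (ENNReal.ofReal_toReal hEne).symm
      _ ≤ _ := ENNReal.ofReal_le_ofReal (le_max_right _ _)
  have KEY2 : (∑' k : Fin (d+m) → ℤ, ENNReal.ofReal (wMix d m Q μ ν k * ‖e k‖ ^ 2)) ≤
      ENNReal.ofReal ((Real.sqrt (max 1 Econst.toReal) * ((K:ℝ)^(-α)+(L:ℝ)^(-β)) *
        ((K:ℝ)^μ+(L:ℝ)^ν))^2) *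
      (∑' k : Fin (d+m) → ℤ, ENNReal.ofReal (wMix d m Q α β k * ‖c k‖ ^ 2)) := by
    refine le_trans KEY (mul_le_mul' ?_ le_rfl)
    calc Econst * ENNReal.ofReal ((((K:ℝ)^(-α)+(L:ℝ)^(-β))*((K:ℝ)^μ+(L:ℝ)^ν))^2)
        ≤ ENNReal.ofReal (Real.sqrt (max 1 Econst.toReal) ^ 2) *
          ENNReal.ofReal ((((K:ℝ)^(-α)+(L:ℝ)^(-β))*((K:ℝ)^μ+(L:ℝ)^ν))^2) :=
          mul_le_mul' hEC le_rfl
      _ = _ := by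
          rw [← ENNReal.ofReal_mul (by positivity)]
          congr 1
          ring
  calc (∑' k : Fin (d+m) → ℤ, ENNReal.ofReal (wMix d m Q μ ν k * ‖e k‖ ^ 2)) ^ ((1:ℝ)/2)
      ≤ (ENNReal.ofReal ((Real.sqrt (max 1 Econst.toReal) * ((K:ℝ)^(-α)+(L:ℝ)^(-β)) *
          ((K:ℝ)^μ+(L:ℝ)^ν))^2) *
        (∑' k : Fin (d+m) → ℤ, ENNReal.ofReal (wMix d m Q α β k * ‖c k‖ ^ 2))) ^ ((1:ℝ)/2) :=
        ENNReal.rpow_le_rpow KEY2 (by norm_num)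
    _ = (ENNReal.ofReal ((Real.sqrt (max 1 Econst.toReal) * ((K:ℝ)^(-α)+(L:ℝ)^(-β)) *
          ((K:ℝ)^μ+(L:ℝ)^ν))^2)) ^ ((1:ℝ)/2) *
        (∑' k : Fin (d+m) → ℤ, ENNReal.ofReal (wMix d m Q α β k * ‖c k‖ ^ 2)) ^ ((1:ℝ)/2) :=
        ENNReal.mul_rpow_of_nonneg _ _ (by norm_num)
    _ = _ := by
        congr 1
        rw [ENNReal.ofReal_pow (by positivity),
          ← ENNReal.rpow_natCast (ENNReal.ofReal (Real.sqrt (max 1 Econst.toReal) *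
            ((K:ℝ)^(-α)+(L:ℝ)^(-β)) * ((K:ℝ)^μ+(L:ℝ)^ν))) 2,
          ← ENNReal.rpow_mul]
        norm_num
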